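/- arXiv:1810.03252 — 10 statements merged into one kernel-verified Lean document; each statement's English description precedes it below -/
import Mathlib

section
/- For every i = 0, …, n one has the identity S_{2i} + φ_{2i+1} · S_{2i+2} = (1 + α_{2i}/φ_{2i}) · S_{2i+1}. -/
open Finset

lemma key (n : ℕ) {K : Type*} [Field K] (a f : ℕ → K) (ha : a (n+1) = a 0) :
    (∑ j ∈ range (n+1), (∏ k ∈ range j, a k * f k) * (1 + a j))
      + f 0 * ∑ j ∈ range (n+1), (∏ k ∈ range j, a (k+1) * f (k+1)) * (1 + a (j+1))
    = (1 + a 0) * ∑ j ∈ range (n+1), (∏ k ∈ range j, f k * a (k+1)) * (1 + f j) := by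
  set P : ℕ → K := fun j => ∏ k ∈ range j, a k * f k with hP
  set Q : ℕ → K := fun j => ∏ k ∈ range j, f k * a (k+1) with hQ
  set R : ℕ → K := fun j => ∏ k ∈ range j, a (k+1) * f (k+1) with hR
  have hPs : ∀ j, P (j+1) = P j * (a j * f j) := fun j => prod_range_succ _ j
  have hQs : ∀ j, Q (j+1) = Q j * (f j * a (j+1)) := fun j => prod_range_succ _ j
  have hRs : ∀ j, R (j+1) = R j * (a (j+1) * f (j+1)) := fun j => prod_range_succ _ j
  have hPQ : ∀ j, P j * a j = a 0 * Q j := by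
    intro j
    induction j with
    | zero => simp [hP, hQ]
    | succ j ih =>
      rw [hPs j, hQs j]
      linear_combination f j * a (j+1) * ih
  have hQR : ∀ j, f 0 * R j = Q j * f j := by
    intro j
    induction j with
    | zero => simp [hQ, hR]
    | succ j ih =>
      rw [hRs j, hQs j]
      linear_combination a (j+1) * f (j+1) * ih
  have hPQn : P (n+1) = Q (n+1) := by
    have h1 : P (n+1) = (∏ k ∈ range (n+1), a k) * ∏ k ∈ range (n+1), f k := by
      rw [hP]; exact prod_mul_distrib
    have h2 : Q (n+1) = (∏ k ∈ range (n+1), f k) * ∏ k ∈ range (n+1), a (k+1) := by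
      rw [hQ]; exact prod_mul_distrib
    have h3 : ∏ k ∈ range (n+1), a (k+1) = ∏ k ∈ range (n+1), a k := by
      rw [prod_range_succ, prod_range_succ' (fun k => a k) n, ha, mul_comm]
    rw [h1, h2, h3, mul_comm]
  have main : ∀ j, P j * (1 + a j) + f 0 * (R j * (1 + a (j+1)))
      = (1 + a 0) * (Q j * (1 + f j)) + ((P j - Q j) - (P (j+1) - Q (j+1))) := by
    intro j
    rw [hPs j, hQs j]
    linear_combination (1 + f j) * hPQ j + (1 + a (j+1)) * hQR j
  show (∑ j ∈ range (n+1), P j * (1 + a j)) + f 0 * ∑ j ∈ range (n+1), R j * (1 + a (j+1))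
    = (1 + a 0) * ∑ j ∈ range (n+1), Q j * (1 + f j)
  rw [mul_sum, ← sum_add_distrib]
  calc ∑ j ∈ range (n+1), (P j * (1 + a j) + f 0 * (R j * (1 + a (j+1))))
      = ∑ j ∈ range (n+1), ((1 + a 0) * (Q j * (1 + f j)) + ((P j - Q j) - (P (j+1) - Q (j+1)))) :=
        sum_congr rfl fun j _ => main j
    _ = (1 + a 0) * ∑ j ∈ range (n+1), Q j * (1 + f j)
        + ((P 0 - Q 0) - (P (n+1) - Q (n+1))) := by
        rw [sum_add_distrib, ← mul_sum, sum_range_sub' (fun j => P j - Q j) (n+1)]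
    _ = (1 + a 0) * ∑ j ∈ range (n+1), Q j * (1 + f j) := by
        rw [hPQn]; simp [hP, hQ]

/-- `S_{2i}`, evaluated at the even index `x = 2i` of `ZMod (2n+2)`. -/
noncomputable def Sev (n : ℕ) {K : Type*} [Field K] (α φ : ZMod (2*n+2) → K)
    (x : ZMod (2*n+2)) : K :=
  ∑ j ∈ range (n+1),
    (∏ k ∈ range j, (α (x + 2*k) / φ (x + 2*k)) * φ (x + 2*k + 1))
      * (1 + α (x + 2*j) / φ (x + 2*j))

/-- `S_{2i+1}`, evaluated at the odd index `x = 2i+1` of `ZMod (2n+2)`. -/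
noncomputable def Sod (n : ℕ) {K : Type*} [Field K] (α φ : ZMod (2*n+2) → K)
    (x : ZMod (2*n+2)) : K :=
  ∑ j ∈ range (n+1),
    (∏ k ∈ range j, φ (x + 2*k) * (α (x + 2*k + 1) / φ (x + 2*k + 1)))
      * (1 + φ (x + 2*j))

/-- `S_{2i} + φ_{2i+1} S_{2i+2} = (1 + α_{2i}/φ_{2i}) S_{2i+1}` for `i = 0, …, n`. -/
theorem stmt0 (n : ℕ) (hn : 1 ≤ n) (K : Type*) [Field K]
    (α φ : ZMod (2*n+2) → K) (hα : ∀ i, α i ≠ 0) (hφ : ∀ i, φ i ≠ 0) :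
    ∀ i : ℕ, i ≤ n →
      Sev n α φ (2*i) + φ (2*i+1) * Sev n α φ (2*i+2)
        = (1 + α (2*i) / φ (2*i)) * Sod n α φ (2*i+1) := by
  intro i hi
  set x : ZMod (2*n+2) := 2*(i : ZMod (2*n+2)) with hx
  set a : ℕ → K := fun j => α (x + 2*(j : ZMod (2*n+2))) / φ (x + 2*(j : ZMod (2*n+2))) with haa
  set f : ℕ → K := fun j => φ (x + 2*(j : ZMod (2*n+2)) + 1) with hff
  have h0 : (2 : ZMod (2*n+2)) * ((n : ZMod (2*n+2)) + 1) = 0 := by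
    have := ZMod.natCast_self (2*n+2)
    push_cast at this
    linear_combination this
  have ha : a (n+1) = a 0 := by
    simp only [haa]
    push_cast
    rw [mul_add]
    norm_num
    rw [show (2 : ZMod (2*n+2)) * (n : ZMod (2*n+2)) + 2 = 0 by linear_combination h0]
    simp
  have hk := key n a f ha
  have e1 : Sev n α φ (2*(i : ZMod (2*n+2)))
      = ∑ j ∈ range (n+1), (∏ k ∈ range j, a k * f k) * (1 + a j) := by
    unfold Sev
    rfl
  have e2 : Sev n α φ (2*(i : ZMod (2*n+2)) + 2)
      = ∑ j ∈ range (n+1), (∏ k ∈ range j, a (k+1) * f (k+1)) * (1 + a (j+1)) := by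
    unfold Sev
    refine sum_congr rfl fun j _ => ?_
    have harg : ∀ m : ℕ, 2*(i : ZMod (2*n+2)) + 2 + 2*(m : ZMod (2*n+2)) = x + 2*((m+1 : ℕ) : ZMod (2*n+2)) := by
      intro m; push_cast; rw [hx]; ring
    congr 1
    · refine prod_congr rfl fun k _ => ?_
      simp only [haa, hff, harg k]
    · simp only [haa, harg j]
  have e3 : Sod n α φ (2*(i : ZMod (2*n+2)) + 1)
      = ∑ j ∈ range (n+1), (∏ k ∈ range j, f k * a (k+1)) * (1 + f j) := by
    unfold Sod
    refine sum_congr rfl fun j _ => ?_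
    have h1 : ∀ m : ℕ, 2*(i : ZMod (2*n+2)) + 1 + 2*(m : ZMod (2*n+2)) = x + 2*(m : ZMod (2*n+2)) + 1 := by
      intro m; rw [hx]; ring
    have h2 : ∀ m : ℕ, 2*(i : ZMod (2*n+2)) + 1 + 2*(m : ZMod (2*n+2)) + 1 = x + 2*((m+1 : ℕ) : ZMod (2*n+2)) := by
      intro m; push_cast; rw [hx]; ring
    have h3 : ∀ m : ℕ, x + 2*(m : ZMod (2*n+2)) + 1 + 1 = x + 2*((m+1 : ℕ) : ZMod (2*n+2)) := by
      intro m; push_cast; ring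
    congr 1
    · refine prod_congr rfl fun k _ => ?_
      simp only [haa, hff, h1 k, h2 k, h3 k]
    · simp only [hff, h1 j]
  have ef : φ (2*(i : ZMod (2*n+2)) + 1) = f 0 := by simp [hff, hx]
  have ea : α (2*(i : ZMod (2*n+2))) / φ (2*(i : ZMod (2*n+2))) = a 0 := by simp [haa, hx]
  rw [e1, e2, e3, ef, ea, hk]
end

section
/- For every i = 0, …, n one has the identity S_{2i} − (α_{2i}/φ_{2i}) · S_{2i+1} = 1 − q/β₀. -/
open Finset

/-- Telescoping identity: for any `x`,
`Sev x - (α x / φ x) · Sod (x+1) = 1 - ∏ₖ (α(x+2k)/φ(x+2k))·φ(x+2k+1)`. -/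
lemma tele (n : ℕ) {K : Type*} [Field K] (α φ : ZMod (2*n+2) → K)
    (x : ZMod (2*n+2)) :
    Sev n α φ x - (α x / φ x) * Sod n α φ (x+1)
      = 1 - ∏ k ∈ range (n+1), (α (x + 2*k) / φ (x + 2*k)) * φ (x + 2*k + 1) := by
  set f : ℕ → K := fun j => ∏ k ∈ range j, (α (x + 2*k) / φ (x + 2*k)) * φ (x + 2*k + 1)
    with hf
  have key : ∀ j : ℕ,
      (α x / φ x) * ∏ k ∈ range j, φ (x + 1 + 2*k) * (α (x + 1 + 2*k + 1) / φ (x + 1 + 2*k + 1))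
        = f j * (α (x + 2*j) / φ (x + 2*j)) := by
    intro j
    induction j with
    | zero => simp [hf]
    | succ j ih =>
      rw [Finset.prod_range_succ, ← mul_assoc, ih]
      simp only [hf]
      rw [Finset.prod_range_succ]
      have e1 : x + 1 + 2*(j : ZMod (2*n+2)) = x + 2*(j:ℕ) + 1 := by push_cast; ring
      have e2 : x + 1 + 2*(j : ZMod (2*n+2)) + 1 = x + 2*((j:ℕ)+1 : ℕ) := by push_cast; ring
      rw [e2, e1]
      push_cast
      ring
  unfold Sev Sod
  rw [Finset.mul_sum, ← Finset.sum_sub_distrib]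
  have step : ∀ j ∈ range (n+1),
      (∏ k ∈ range j, (α (x + 2*k) / φ (x + 2*k)) * φ (x + 2*k + 1))
          * (1 + α (x + 2*j) / φ (x + 2*j))
        - (α x / φ x) *
          ((∏ k ∈ range j, φ (x + 1 + 2*k) * (α (x + 1 + 2*k + 1) / φ (x + 1 + 2*k + 1)))
            * (1 + φ (x + 1 + 2*j)))
        = f j - f (j+1) := by
    intro j _
    rw [← mul_assoc, key j]
    simp only [hf]
    have e1 : x + 1 + 2*(j : ZMod (2*n+2)) = x + 2*(j:ℕ) + 1 := by push_cast; ring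
    rw [e1, Finset.prod_range_succ]
    ring
  rw [Finset.sum_congr rfl step, Finset.sum_range_sub' f (n+1)]
  simp [hf]

/-- Cyclic shift invariance of a full even-indexed product. -/
lemma cyc (n : ℕ) {K : Type*} [Field K] (h : ZMod (2*n+2) → K)
    (hh : ∀ y, h y ≠ 0) (y : ZMod (2*n+2)) :
    ∏ k ∈ range (n+1), h (y + 2 + 2*k) = ∏ k ∈ range (n+1), h (y + 2*k) := by
  have e1 := Finset.prod_range_succ (fun k : ℕ => h (y + 2*k)) (n+1)
  have e2 := Finset.prod_range_succ' (fun k : ℕ => h (y + 2*k)) (n+1)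
  have hz : (2 : ZMod (2*n+2)) * ((n:ℕ)+1 : ℕ) = 0 := by
    have : ((2*n+2 : ℕ) : ZMod (2*n+2)) = 0 := ZMod.natCast_self _
    push_cast at this ⊢
    linear_combination this
  have he1 : y + 2*((n+1 : ℕ) : ZMod (2*n+2)) = y := by
    push_cast at hz ⊢
    linear_combination hz
  rw [he1] at e1
  have he2 : ∀ k : ℕ, y + 2*((k+1 : ℕ) : ZMod (2*n+2)) = y + 2 + 2*(k : ℕ) := by
    intro k; push_cast; ring
  simp only [he2, Nat.cast_zero, mul_zero, add_zero] at e2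
  have := e1.symm.trans e2
  exact (mul_right_cancel₀ (hh y) this).symm

lemma shift (n : ℕ) {K : Type*} [Field K] (h : ZMod (2*n+2) → K)
    (hh : ∀ y, h y ≠ 0) (i : ℕ) :
    ∏ k ∈ range (n+1), h (2*(i : ZMod (2*n+2)) + 2*k)
      = ∏ k ∈ range (n+1), h (2*k) := by
  induction i with
  | zero => simp
  | succ i ih =>
    have e : ∀ k : ℕ, 2*((i+1 : ℕ) : ZMod (2*n+2)) + 2*(k:ℕ)
        = 2*((i:ℕ) : ZMod (2*n+2)) + 2 + 2*(k:ℕ) := by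
      intro k; push_cast; ring
    simp only [e]
    rw [cyc n h hh (2*(i : ZMod (2*n+2)))]
    exact ih

lemma even_odd {K : Type*} [CommMonoid K] (f : ℕ → K) :
    ∀ m : ℕ, ∏ i ∈ range (2*m), f i = ∏ k ∈ range m, f (2*k) * f (2*k+1) := by
  intro m
  induction m with
  | zero => simp
  | succ m ih =>
    have : 2*(m+1) = (2*m+1)+1 := by ring
    rw [this, Finset.prod_range_succ, Finset.prod_range_succ, ih, Finset.prod_range_succ,
      mul_assoc]

/-- `S_{2i} - (α_{2i}/φ_{2i}) S_{2i+1} = 1 - q/β₀` for `i = 0, …, n`,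
where `q = ∏_{i=0}^{2n+1} α_i` and `β₀ = ∏_{i=0}^{n} φ_{2i} α_{2i+1}/φ_{2i+1}`. -/
theorem stmt2 (n : ℕ) (hn : 1 ≤ n) (K : Type*) [Field K]
    (α φ : ZMod (2*n+2) → K) (hα : ∀ i, α i ≠ 0) (hφ : ∀ i, φ i ≠ 0)
    (q β₀ : K)
    (hq : q = ∏ i ∈ range (2*n+2), α (i : ZMod (2*n+2)))
    (hβ₀ : β₀ = ∏ i ∈ range (n+1), φ (2*i) * α (2*i+1) / φ (2*i+1)) :
    ∀ i : ℕ, i ≤ n →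
      Sev n α φ (2*i) - (α (2*i) / φ (2*i)) * Sod n α φ (2*i+1) = 1 - q / β₀ := by
  intro i _
  rw [tele n α φ (2*(i : ZMod (2*n+2)))]
  congr 1
  set h : ZMod (2*n+2) → K := fun y => (α y / φ y) * φ (y + 1) with hh
  have hhne : ∀ y, h y ≠ 0 := by
    intro y
    exact mul_ne_zero (div_ne_zero (hα y) (hφ y)) (hφ _)
  have hs := shift n h hhne i
  simp only [hh] at hs
  rw [hs]
  -- now show ∏ k, (α(2k)/φ(2k)) * φ(2k+1) = q / β₀
  have hβ₀ne : β₀ ≠ 0 := by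
    rw [hβ₀]
    exact Finset.prod_ne_zero_iff.2 fun k _ =>
      div_ne_zero (mul_ne_zero (hφ _) (hα _)) (hφ _)
  have he := even_odd (fun i : ℕ => α (i : ZMod (2*n+2))) (n+1)
  rw [show 2*(n+1) = 2*n+2 by ring] at he
  rw [eq_div_iff hβ₀ne, hβ₀, ← Finset.prod_mul_distrib, hq, he]
  apply Finset.prod_congr rfl
  intro k _
  have c1 : ((2*k : ℕ) : ZMod (2*n+2)) = 2*(k : ZMod (2*n+2)) := by push_cast; ring
  have c2 : ((2*k+1 : ℕ) : ZMod (2*n+2)) = 2*(k : ZMod (2*n+2)) + 1 := by push_cast; ring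
  rw [c1, c2]
  have n1 := hφ (2*(k : ZMod (2*n+2)))
  have n2 := hφ (2*(k : ZMod (2*n+2))+1)
  field_simp
end

section
/- For every j ∈ ℤ/(2n+2)ℤ, the map r_j is an involution: applying r_j twice to any tuple (α, φ) (with all nonvanishing conditions holding for the intermediate tuple) returns the original tuple, i.e. r_j ∘ r_j = id. -/
/-- The Cartan matrix of type `A_{2n+1}^{(1)}`, with rows and columns indexed by
`ZMod (2n+2)`. -/
def cartan (n : ℕ) (i j : ZMod (2*n+2)) : ℤ :=
  if i = j then 2 else if i = j + 1 ∨ j = i + 1 then -1 else 0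

/-- The `α`-component of the simple reflection `r_j`:
`r_j(α)_i = α_i α_j^{-a_{j,i}}`. -/
noncomputable def rα (n : ℕ) {K : Type*} [Field K] (j : ZMod (2*n+2))
    (α : ZMod (2*n+2) → K) : ZMod (2*n+2) → K :=
  fun i => α i * α j ^ (-(cartan n j i))

/-- The `φ`-component of the simple reflection `r_j`:
`r_j(φ)_i = φ_i α_j^{-δ_{i,j}+δ_{i,j+1}} ((α_j+φ_j)/(1+φ_j))^{δ_{i,j-1}-δ_{i,j+1}}`. -/
noncomputable def rφ (n : ℕ) {K : Type*} [Field K] (j : ZMod (2*n+2))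
    (α φ : ZMod (2*n+2) → K) : ZMod (2*n+2) → K :=
  fun i => φ i * α j ^ (((if i = j + 1 then 1 else 0) : ℤ) - ((if i = j then 1 else 0) : ℤ))
    * ((α j + φ j) / (1 + φ j))
        ^ (((if i = j - 1 then 1 else 0) : ℤ) - ((if i = j + 1 then 1 else 0) : ℤ))

/-- The nonvanishing conditions on a tuple `(α, φ)`:
`α_i ≠ 0`, `φ_i ≠ 0`, `1 + φ_i ≠ 0` and `α_i + φ_i ≠ 0` for all `i`. -/
def Good (n : ℕ) {K : Type*} [Field K] (α φ : ZMod (2*n+2) → K) : Prop :=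
  ∀ i, α i ≠ 0 ∧ φ i ≠ 0 ∧ 1 + φ i ≠ 0 ∧ α i + φ i ≠ 0

/-- each `r_j` is an involution on tuples `(α, φ)`. -/
theorem stmt8 (n : ℕ) (hn : 1 ≤ n) (K : Type*) [Field K]
    (α φ : ZMod (2*n+2) → K) (h : Good n α φ) :
    ∀ j : ZMod (2*n+2),
      Good n (rα n j α) (rφ n j α φ) →
      rα n j (rα n j α) = α ∧ rφ n j (rα n j α) (rφ n j α φ) = φ := by

  intro j _
  obtain ⟨ha, hp, h1p, hap⟩ := h j
  have h1ne : (1 : ZMod (2*n+2)) ≠ 0 := by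
    intro h0
    have h := (ZMod.natCast_eq_zero_iff 1 (2*n+2)).mp (by exact_mod_cast h0)
    have := Nat.le_of_dvd one_pos h
    omega
  have h2ne : (2 : ZMod (2*n+2)) ≠ 0 := by
    intro h0
    have h := (ZMod.natCast_eq_zero_iff 2 (2*n+2)).mp (by exact_mod_cast h0)
    have := Nat.le_of_dvd two_pos h
    omega
  have hj1 : j ≠ j + 1 := fun h0 => h1ne (left_eq_add.mp h0)
  have hjm : j ≠ j - 1 := by
    intro h0
    apply h1ne
    have h2 : j + 1 = j := by linear_combination h0
    exact left_eq_add.mp h2.symm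
  have hc : cartan n j j = 2 := by unfold cartan; simp
  have hαj' : rα n j α j = (α j)⁻¹ := by
    unfold rα
    rw [hc, show (-(2:ℤ)) = -1 + -1 by norm_num, zpow_add₀ ha, zpow_neg_one]
    field_simp
  have hφj' : rφ n j α φ j = φ j * (α j)⁻¹ := by
    unfold rφ
    rw [if_neg hj1, if_pos rfl, if_neg hjm]
    norm_num [zpow_neg_one]
  have hd : 1 + φ j * (α j)⁻¹ ≠ 0 := by
    have e : 1 + φ j * (α j)⁻¹ = (α j + φ j) / α j := by field_simp
    rw [e]; exact div_ne_zero hap ha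
  have hr' : ((α j)⁻¹ + φ j * (α j)⁻¹) / (1 + φ j * (α j)⁻¹)
      = ((α j + φ j) / (1 + φ j))⁻¹ := by
    rw [inv_div, div_eq_div_iff hd hap]
    field_simp
  have hrne : ((α j + φ j) / (1 + φ j)) ≠ 0 := div_ne_zero hap h1p
  constructor
  · funext i
    show rα n j α i * rα n j α j ^ (-(cartan n j i)) = α i
    rw [hαj']
    show α i * α j ^ (-(cartan n j i)) * (α j)⁻¹ ^ (-(cartan n j i)) = α i
    rw [inv_zpow, mul_assoc, mul_inv_cancel₀ (zpow_ne_zero _ ha), mul_one]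
  · funext i
    show rφ n j α φ i * rα n j α j ^ _ * ((rα n j α j + rφ n j α φ j) / (1 + rφ n j α φ j)) ^ _
        = φ i
    rw [hαj', hφj', hr']
    show φ i * α j ^ (((if i = j + 1 then 1 else 0) : ℤ) - ((if i = j then 1 else 0) : ℤ))
      * ((α j + φ j) / (1 + φ j))
          ^ (((if i = j - 1 then 1 else 0) : ℤ) - ((if i = j + 1 then 1 else 0) : ℤ))
      * (α j)⁻¹ ^ (((if i = j + 1 then 1 else 0) : ℤ) - ((if i = j then 1 else 0) : ℤ))
      * (((α j + φ j) / (1 + φ j))⁻¹)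
          ^ (((if i = j - 1 then 1 else 0) : ℤ) - ((if i = j + 1 then 1 else 0) : ℤ))
      = φ i
    rw [inv_zpow, inv_zpow]
    have e1 : α j ^ (((if i = j + 1 then 1 else 0) : ℤ) - ((if i = j then 1 else 0) : ℤ)) ≠ 0 :=
      zpow_ne_zero _ ha
    have e2 : ((α j + φ j) / (1 + φ j))
        ^ (((if i = j - 1 then 1 else 0) : ℤ) - ((if i = j + 1 then 1 else 0) : ℤ)) ≠ 0 :=
      zpow_ne_zero _ hrne
    have key : ∀ (x A B : K), A ≠ 0 → B ≠ 0 → x * A * B * A⁻¹ * B⁻¹ = x := by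
      intro x A B hA hB
      field_simp
    exact key _ _ _ e1 e2
end

section
/- For all i, j ∈ ℤ/(2n+2)ℤ with j = i + 1 (so that a_{i,j} = −1), the maps r_i and r_j satisfy the braid relation r_i ∘ r_j ∘ r_i = r_j ∘ r_i ∘ r_j on tuples (α, φ) (with all nonvanishing conditions holding for every intermediate tuple). -/
set_option maxHeartbeats 3200000 in
/-- the braid relation `r_i r_{i+1} r_i = r_{i+1} r_i r_{i+1}`
(the case `a_{i,j} = -1`, `j = i + 1`) on tuples `(α, φ)`. -/
theorem stmt9 (n : ℕ) (hn : 1 ≤ n) (K : Type*) [Field K]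
    (α φ : ZMod (2*n+2) → K) (h : Good n α φ) :
    ∀ i : ZMod (2*n+2),
      Good n (rα n i α) (rφ n i α φ) →
      Good n (rα n (i+1) (rα n i α)) (rφ n (i+1) (rα n i α) (rφ n i α φ)) →
      Good n (rα n (i+1) α) (rφ n (i+1) α φ) →
      Good n (rα n i (rα n (i+1) α)) (rφ n i (rα n (i+1) α) (rφ n (i+1) α φ)) →
      rα n i (rα n (i+1) (rα n i α)) = rα n (i+1) (rα n i (rα n (i+1) α))
      ∧ rφ n i (rα n (i+1) (rα n i α)) (rφ n (i+1) (rα n i α) (rφ n i α φ))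
          = rφ n (i+1) (rα n i (rα n (i+1) α)) (rφ n i (rα n (i+1) α) (rφ n (i+1) α φ)) := by
  intro i h1 h2 h3 h4
  have hc1 : (1 : ZMod (2*n+2)) ≠ 0 := by
    have : ¬ ((2*n+2) ∣ 1) := fun hd => by have := Nat.le_of_dvd (by norm_num) hd; omega
    simpa [Ne, show ((1:ℕ) : ZMod (2*n+2)) = 1 by push_cast; ring,
      ← ZMod.natCast_eq_zero_iff] using this
  have hc2 : (2 : ZMod (2*n+2)) ≠ 0 := by
    have : ¬ ((2*n+2) ∣ 2) := fun hd => by have := Nat.le_of_dvd (by norm_num) hd; omega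
    simpa [Ne, show ((2:ℕ) : ZMod (2*n+2)) = 2 by push_cast; ring,
      ← ZMod.natCast_eq_zero_iff] using this
  have hc3 : (3 : ZMod (2*n+2)) ≠ 0 := by
    have : ¬ ((2*n+2) ∣ 3) := fun hd => by have := Nat.le_of_dvd (by norm_num) hd; omega
    simpa [Ne, show ((3:ℕ) : ZMod (2*n+2)) = 3 by push_cast; ring,
      ← ZMod.natCast_eq_zero_iff] using this
  have n1 : i + 1 ≠ i := fun e => hc1 (by linear_combination e)
  have n2 : i + 1 + 1 ≠ i := fun e => hc2 (by linear_combination e)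
  have n3 : i + 1 + 1 ≠ i + 1 := fun e => hc1 (by linear_combination e)
  have n4 : i - 1 ≠ i := fun e => hc1 (by linear_combination -e)
  have n5 : i - 1 ≠ i + 1 := fun e => hc2 (by linear_combination -e)
  have n6 : i - 1 ≠ i + 1 + 1 := fun e => hc3 (by linear_combination -e)
  have n7 : i + 1 + 1 + 1 ≠ i := fun e => hc3 (by linear_combination e)
  have n8 : i + 1 + 1 + 1 ≠ i + 1 := fun e => hc2 (by linear_combination e)
  obtain ⟨ha, hq, hq1, hq2⟩ := h i
  obtain ⟨hb, hr, hr1, hr2⟩ := h (i+1)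
  have H1 := h1 (i+1)
  have H2 := h2 i
  have H3 := h3 i
  have H4 := h4 (i+1)
  simp only [rα, rφ, cartan, add_sub_cancel_right, sub_add_cancel,
    n1, n1.symm, n2, n2.symm, n3, n3.symm, n4, n4.symm, n5, n5.symm, n6, n6.symm, n7, n7.symm, n8, n8.symm,
    if_true, if_false, eq_self_iff_true, or_true, true_or, or_self, or_false, false_or,
    ite_true, ite_false] at H1 H2 H3 H4
  simp only [neg_neg, neg_zero, sub_zero, zero_sub, sub_self, zpow_neg, zpow_zero, zpow_one,
        zpow_two, mul_one, one_mul] at H1 H2 H3 H4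
  have S1 := H1.2.2.1
  have S2 := H1.2.2.2
  have S3 := H2.2.2.1
  have S4 := H2.2.2.2
  have T1 := H3.2.2.1
  have T2 := H3.2.2.2
  have T3 := H4.2.2.1
  have T4 := H4.2.2.2
  field_simp [ha, hb, hq, hr, hq1, hq2, hr1, hr2] at S1 S2 T1 T2
  field_simp [ha, hb, hq, hr, hq1, hq2, hr1, hr2, H1.2.2.1, H1.2.2.2, S1, S2] at S3 S4
  field_simp [ha, hb, hq, hr, hq1, hq2, hr1, hr2, H3.2.2.1, H3.2.2.2, T1, T2] at T3 T4
  have P1 := (div_ne_zero_iff.mp S1).1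
  have P2 := (mul_ne_zero_iff.mp (div_ne_zero_iff.mp S2).1).2
  have P3 := (div_ne_zero_iff.mp T1).1
  have P4 := (div_ne_zero_iff.mp T2).1
  have P5 : α i + φ i + α i * φ (i + 1) * (1 + φ i) + φ i * (α (i + 1) * (α i + φ i) + φ (i + 1) * (1 + φ i)) ≠ 0 := by
    have hA : α i + φ i + α i * φ (i + 1) * (1 + φ i) ≠ 0 := by convert P1 using 1; ring
    intro e; apply S3; rw [one_add_div hA, div_eq_zero_iff]; left; linear_combination e
  have P6 : α (i + 1) * (α i + φ i + α i * φ (i + 1) * (1 + φ i)) + φ i * (α (i + 1) * (α i + φ i) + φ (i + 1) * (1 + φ i)) ≠ 0 := by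
    have hA : α i + φ i + α i * φ (i + 1) * (1 + φ i) ≠ 0 := by convert P1 using 1; ring
    intro e; apply S4; rw [add_div' _ _ _ hA, div_eq_zero_iff]; left; linear_combination e
  have P7 : α (i + 1) * α i * (1 + φ (i + 1)) + φ i * (α (i + 1) + φ (i + 1)) + φ (i + 1) * α i * (1 + φ (i + 1) + φ i * (α (i + 1) + φ (i + 1))) ≠ 0 := by
    have hD : α (i + 1) * α i * (1 + φ (i + 1)) + φ i * (α (i + 1) + φ (i + 1)) ≠ 0 := by convert P4 using 1; ring
    intro e; apply T3; rw [one_add_div hD, div_eq_zero_iff]; left; linear_combination e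
  have P8 : α (i + 1) * α i * (1 + φ (i + 1)) + φ i * (α (i + 1) + φ (i + 1)) + φ (i + 1) * (1 + φ (i + 1) + φ i * (α (i + 1) + φ (i + 1))) ≠ 0 := by
    have hD : α (i + 1) * α i * (1 + φ (i + 1)) + φ i * (α (i + 1) + φ (i + 1)) ≠ 0 := by convert P4 using 1; ring
    intro e; apply T4; rw [one_add_div hD, mul_div_assoc', div_eq_zero_iff]; left; linear_combination α i * e
  constructor
  · funext k
    rcases eq_or_ne k i with rfl | k1
    · simp only [rα, rφ, cartan, add_sub_cancel_right, sub_add_cancel,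
        n1, n1.symm, n2, n2.symm, n3, n3.symm, n4, n4.symm, n5, n5.symm, n6, n6.symm, n7, n7.symm, n8, n8.symm,
        if_true, if_false, eq_self_iff_true, or_true, true_or, or_self, or_false, false_or,
        ite_true, ite_false]
      simp only [neg_neg, neg_zero, sub_zero, zero_sub, sub_self, zpow_neg, zpow_zero, zpow_one,
        zpow_two, mul_one, one_mul]
      field_simp
      try ring
    rcases eq_or_ne k (i+1) with rfl | k2
    · simp only [rα, rφ, cartan, add_sub_cancel_right, sub_add_cancel,
        n1, n1.symm, n2, n2.symm, n3, n3.symm, n4, n4.symm, n5, n5.symm, n6, n6.symm, n7, n7.symm, n8, n8.symm,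
        if_true, if_false, eq_self_iff_true, or_true, true_or, or_self, or_false, false_or,
        ite_true, ite_false]
      simp only [neg_neg, neg_zero, sub_zero, zero_sub, sub_self, zpow_neg, zpow_zero, zpow_one,
        zpow_two, mul_one, one_mul]
      field_simp
      try ring
    rcases eq_or_ne k (i+1+1) with rfl | k3
    · simp only [rα, rφ, cartan, add_sub_cancel_right, sub_add_cancel,
        n1, n1.symm, n2, n2.symm, n3, n3.symm, n4, n4.symm, n5, n5.symm, n6, n6.symm, n7, n7.symm, n8, n8.symm,
        if_true, if_false, eq_self_iff_true, or_true, true_or, or_self, or_false, false_or,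
        ite_true, ite_false]
      simp only [neg_neg, neg_zero, sub_zero, zero_sub, sub_self, zpow_neg, zpow_zero, zpow_one,
        zpow_two, mul_one, one_mul]
      field_simp
      try ring
    rcases eq_or_ne k (i-1) with rfl | k4
    · simp only [rα, rφ, cartan, add_sub_cancel_right, sub_add_cancel,
        n1, n1.symm, n2, n2.symm, n3, n3.symm, n4, n4.symm, n5, n5.symm, n6, n6.symm, n7, n7.symm, n8, n8.symm,
        if_true, if_false, eq_self_iff_true, or_true, true_or, or_self, or_false, false_or,
        ite_true, ite_false]
      simp only [neg_neg, neg_zero, sub_zero, zero_sub, sub_self, zpow_neg, zpow_zero, zpow_one,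
        zpow_two, mul_one, one_mul]
      field_simp
      try ring
    · have d1 : i ≠ k + 1 := fun e => k4 (by simp [e])
      have d2 : i + 1 ≠ k + 1 := fun e => k1 (add_right_cancel e.symm)
      simp only [rα, rφ, cartan, add_sub_cancel_right, sub_add_cancel,
        n1, n1.symm, n2, n2.symm, n3, n3.symm, n4, n4.symm, n5, n5.symm, n6, n6.symm,
        k1, k1.symm, k2, k2.symm, k3, k3.symm, k4, k4.symm, d1, d2,
        if_true, if_false, eq_self_iff_true, or_true, true_or, or_self, or_false, false_or,
        ite_true, ite_false]
      simp only [neg_neg, neg_zero, sub_zero, zero_sub, sub_self, zpow_neg, zpow_zero, zpow_one,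
        zpow_two, mul_one, one_mul]
  · funext k
    rcases eq_or_ne k i with rfl | k1
    · simp only [rα, rφ, cartan, add_sub_cancel_right, sub_add_cancel,
        n1, n1.symm, n2, n2.symm, n3, n3.symm, n4, n4.symm, n5, n5.symm, n6, n6.symm, n7, n7.symm, n8, n8.symm,
        if_true, if_false, eq_self_iff_true, or_true, true_or, or_self, or_false, false_or,
        ite_true, ite_false]
      simp only [neg_neg, neg_zero, sub_zero, zero_sub, sub_self, zpow_neg, zpow_zero, zpow_one,
        zpow_two, mul_one, one_mul]
      field_simp
      have Y1 : α k + φ k + α k * φ (k + 1) * (1 + φ k) ≠ 0 := by convert P1 using 1; ring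
      have Y2 : α k * α (k + 1) * (1 + φ (k + 1)) + φ k * (α (k + 1) + φ (k + 1)) +
        α k * φ (k + 1) * (1 + φ (k + 1) + φ k * (α (k + 1) + φ (k + 1))) ≠ 0 := by convert P7 using 1; ring
      rw [div_eq_div_iff Y1 Y2]
      ring
    rcases eq_or_ne k (i+1) with rfl | k2
    · simp only [rα, rφ, cartan, add_sub_cancel_right, sub_add_cancel,
        n1, n1.symm, n2, n2.symm, n3, n3.symm, n4, n4.symm, n5, n5.symm, n6, n6.symm, n7, n7.symm, n8, n8.symm,
        if_true, if_false, eq_self_iff_true, or_true, true_or, or_self, or_false, false_or,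
        ite_true, ite_false]
      simp only [neg_neg, neg_zero, sub_zero, zero_sub, sub_self, zpow_neg, zpow_zero, zpow_one,
        zpow_two, mul_one, one_mul]
      field_simp
      rw [div_eq_iff (by convert P6 using 1; ring)]
      ring
    rcases eq_or_ne k (i+1+1) with rfl | k3
    · simp only [rα, rφ, cartan, add_sub_cancel_right, sub_add_cancel,
        n1, n1.symm, n2, n2.symm, n3, n3.symm, n4, n4.symm, n5, n5.symm, n6, n6.symm, n7, n7.symm, n8, n8.symm,
        if_true, if_false, eq_self_iff_true, or_true, true_or, or_self, or_false, false_or,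
        ite_true, ite_false]
      simp only [neg_neg, neg_zero, sub_zero, zero_sub, sub_self, zpow_neg, zpow_zero, zpow_one,
        zpow_two, mul_one, one_mul]
      field_simp
      have Y1 : α (i + 1) * (α i + φ i) + φ (i + 1) * (1 + φ i) ≠ 0 := by convert P2 using 1; ring
      have Y2 : α (i + 1) * α i * (1 + φ (i + 1)) + φ i * (α (i + 1) + φ (i + 1)) ≠ 0 := by convert P4 using 1; ring
      have Y3 : α (i + 1) * α i * (1 + φ (i + 1)) + φ i * (α (i + 1) + φ (i + 1)) +
        α i * φ (i + 1) * (1 + φ (i + 1) + φ i * (α (i + 1) + φ (i + 1))) ≠ 0 := by convert P7 using 1; ring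
      have Y4 : α i * α (i + 1) * (1 + φ (i + 1)) + φ i * (α (i + 1) + φ (i + 1)) +
        φ (i + 1) * (1 + φ (i + 1) + φ i * (α (i + 1) + φ (i + 1))) ≠ 0 := by convert P8 using 1; ring
      field_simp
      ring
    rcases eq_or_ne k (i-1) with rfl | k4
    · simp only [rα, rφ, cartan, add_sub_cancel_right, sub_add_cancel,
        n1, n1.symm, n2, n2.symm, n3, n3.symm, n4, n4.symm, n5, n5.symm, n6, n6.symm, n7, n7.symm, n8, n8.symm,
        if_true, if_false, eq_self_iff_true, or_true, true_or, or_self, or_false, false_or,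
        ite_true, ite_false]
      simp only [neg_neg, neg_zero, sub_zero, zero_sub, sub_self, zpow_neg, zpow_zero, zpow_one,
        zpow_two, mul_one, one_mul]
      field_simp
      have Y1 : α i + φ i + α i * (1 + φ i) * φ (i + 1) ≠ 0 := by convert P1 using 1; ring
      have Y2 : α i + φ i + α i * (1 + φ i) * φ (i + 1) + φ i * ((α i + φ i) * α (i + 1) + (1 + φ i) * φ (i + 1)) ≠ 0 := by convert P5 using 1; ring
      have Y3 : α (i + 1) * (α i + φ i + α i * (1 + φ i) * φ (i + 1)) + φ i * ((α i + φ i) * α (i + 1) + (1 + φ i) * φ (i + 1)) ≠ 0 := by convert P6 using 1; ring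
      field_simp
      ring
    · have d1 : i ≠ k + 1 := fun e => k4 (by simp [e])
      have d2 : i + 1 ≠ k + 1 := fun e => k1 (add_right_cancel e.symm)
      simp only [rα, rφ, cartan, add_sub_cancel_right, sub_add_cancel,
        n1, n1.symm, n2, n2.symm, n3, n3.symm, n4, n4.symm, n5, n5.symm, n6, n6.symm, n7, n7.symm, n8, n8.symm,
        k1, k1.symm, k2, k2.symm, k3, k3.symm, k4, k4.symm, d1, d2,
        if_true, if_false, eq_self_iff_true, or_true, true_or, or_self, or_false, false_or,
        ite_true, ite_false]
      simp only [neg_neg, neg_zero, sub_zero, zero_sub, sub_self, zpow_neg, zpow_zero, zpow_one,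
        zpow_two, mul_one, one_mul]
end

section
/- For all i, j ∈ ℤ/(2n+2)ℤ with a_{i,j} = 0 (i.e. i ≢ j and i ≢ j ± 1 modulo 2n+2), the maps r_i and r_j commute: r_i ∘ r_j = r_j ∘ r_i on tuples (α, φ). -/
/-- the commuting relation `r_i r_j = r_j r_i` in the case `a_{i,j} = 0`
(i.e. `i ≠ j`, `i ≠ j ± 1` modulo `2n+2`) on tuples `(α, φ)`. -/
theorem stmt10 (n : ℕ) (hn : 1 ≤ n) (K : Type*) [Field K]
    (α φ : ZMod (2*n+2) → K) (h : Good n α φ) :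
    ∀ i j : ZMod (2*n+2), i ≠ j → i ≠ j + 1 → j ≠ i + 1 →
      Good n (rα n j α) (rφ n j α φ) →
      Good n (rα n i α) (rφ n i α φ) →
      rα n i (rα n j α) = rα n j (rα n i α)
      ∧ rφ n i (rα n j α) (rφ n j α φ) = rφ n j (rα n i α) (rφ n i α φ) := by
  intro i j hij hij1 hji1 _ _
  have hji : j ≠ i := fun hh => hij hh.symm
  have hijm : i ≠ j - 1 := fun hh => hji1 (by rw [hh]; ring)
  have hjim : j ≠ i - 1 := fun hh => hij1 (by rw [hh]; ring)
  have hcji : cartan n j i = 0 := by simp [cartan, hji, hij1, hji1]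
  have hcij : cartan n i j = 0 := by simp [cartan, hij, hij1, hji1]
  have hαji : rα n j α i = α i := by simp [rα, hcji]
  have hαij : rα n i α j = α j := by simp [rα, hcij]
  have hφji : rφ n j α φ i = φ i := by simp [rφ, hij, hij1, hijm]
  have hφij : rφ n i α φ j = φ j := by simp [rφ, hji, hji1, hjim]
  constructor
  · funext k
    simp only [rα, hcji, hcij, neg_zero, zpow_zero, mul_one]
    ring
  · funext k
    simp only [rφ, rα, hcji, hcij, neg_zero, zpow_zero, mul_one,
      if_neg hij, if_neg hij1, if_neg hijm, if_neg hji, if_neg hji1, if_neg hjim,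
      sub_zero, zero_sub, zpow_neg]
    ring
end

section
/- The map s₁ is an involution: applying s₁ twice to any tuple (α, φ) (with the nonvanishing of all sums S occurring in denominators, both for the original and the transformed tuple) returns the original tuple, i.e. s₁ ∘ s₁ = id. -/
open Finset

/-- `S'_x` (the same formula covers both even and odd indices `x` of `ZMod (2n+2)`). -/
noncomputable def Sp (n : ℕ) {K : Type*} [Field K] (α φ : ZMod (2*n+2) → K)
    (x : ZMod (2*n+2)) : K :=
  ∑ j ∈ range (n+1),
    (∏ k ∈ range j, (φ (x + 2*k) / α (x + 2*k)) * (φ (x + 2*k + 1) / α (x + 2*k + 1)))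
      * (1 + φ (x + 2*j) / α (x + 2*j))

/-- The `φ`-component of the map `s₁` (the `α`-component is the identity):
`s₁(φ)_{2i} = α_{2i} φ_{2i+1} S_{2i+2}/S_{2i}` and
`s₁(φ)_{2i+1} = (φ_{2i+2}/α_{2i+2}) S_{2i+1}/S_{2i+3}`; since the modulus `2n+2`
is even, the parity of an index `x : ZMod (2n+2)` is detected by `x.val`. -/
noncomputable def s1φ (n : ℕ) {K : Type*} [Field K] (α φ : ZMod (2*n+2) → K)
    (x : ZMod (2*n+2)) : K :=
  if Even x.val then α x * φ (x+1) * Sev n α φ (x+2) / Sev n α φ x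
  else (φ (x+1) / α (x+1)) * Sod n α φ x / Sod n α φ (x+2)

/-- The `φ`-component of the map `s'₁` (the `α`-component is the identity):
`s'₁(φ)_{2i} = (α_{2i} α_{2i+1}/φ_{2i+1}) S'_{2i}/S'_{2i+2}` and
`s'₁(φ)_{2i+1} = (α_{2i+1} α_{2i+2}/φ_{2i+2}) S'_{2i+1}/S'_{2i+3}`;
both cases are given by one and the same formula in the index `x`. -/
noncomputable def s1'φ (n : ℕ) {K : Type*} [Field K] (α φ : ZMod (2*n+2) → K)
    (x : ZMod (2*n+2)) : K :=
  (α x * α (x+1) / φ (x+1)) * Sp n α φ x / Sp n α φ (x+2)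


namespace Stmt11Aux


variable {n : ℕ} {K : Type*} [Field K]

/-- parity of values in `ZMod (2*n+2)` -/
lemma parity_add_nat (x : ZMod (2*n+2)) (c : ℕ) :
    Even (x + (c : ZMod (2*n+2))).val ↔ (Even x.val ↔ Even c) := by
  haveI : NeZero (2*n+2) := ⟨by omega⟩
  rw [ZMod.val_add, ZMod.val_natCast]
  rw [Nat.even_iff, Nat.even_iff, Nat.even_iff, Nat.mod_mod_of_dvd _ ⟨n+1, by ring⟩,
    Nat.add_mod, Nat.mod_mod_of_dvd _ ⟨n+1, by ring⟩, ← Nat.add_mod, Nat.add_mod x.val c 2]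
  omega

lemma parity_shift_iff (x : ZMod (2*n+2)) (k : ℕ) :
    Even (x + 2*(k : ZMod (2*n+2))).val ↔ Even x.val := by
  have h : x + 2*(k : ZMod (2*n+2)) = x + ((2*k : ℕ) : ZMod (2*n+2)) := by push_cast; ring
  rw [h, parity_add_nat]
  simp [even_two_mul]

lemma parity_shift_odd_iff (x : ZMod (2*n+2)) (k : ℕ) :
    Even (x + 2*(k : ZMod (2*n+2)) + 1).val ↔ ¬ Even x.val := by
  have h : x + 2*(k : ZMod (2*n+2)) + 1 = x + ((2*k+1 : ℕ) : ZMod (2*n+2)) := by push_cast; ring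
  rw [h, parity_add_nat]
  constructor
  · intro h1 h2
    have := h1.mp h2
    simp [Nat.even_add_one, Nat.even_iff, Nat.mul_mod_right] at this
  · intro h1
    constructor
    · intro h2; exact absurd h2 h1
    · intro h2
      exfalso
      simp [Nat.even_add_one, Nat.even_iff, Nat.mul_mod_right] at h2

lemma parity_even_shift (x : ZMod (2*n+2)) (hx : Even x.val) (k : ℕ) :
    Even (x + 2*(k : ZMod (2*n+2))).val := (parity_shift_iff x k).mpr hx

lemma parity_odd_shift (x : ZMod (2*n+2)) (hx : Even x.val) (k : ℕ) :
    ¬ Even (x + 2*(k : ZMod (2*n+2)) + 1).val := by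
  rw [parity_shift_odd_iff]
  exact fun h => h hx

lemma prod_shift (f : ℕ → K) (m : ℕ) (hf : f m = f 0) (h0 : f 0 ≠ 0) :
    ∏ k ∈ range m, f (k+1) = ∏ k ∈ range m, f k := by
  have h1 := Finset.prod_range_succ' f m
  have h2 := Finset.prod_range_succ f m
  apply mul_right_cancel₀ h0
  rw [← h1, h2, hf]

lemma prod_div_telescope (f : ℕ → K) (hf : ∀ k, f k ≠ 0) (m : ℕ) :
    ∏ k ∈ range m, f k / f (k+1) = f 0 / f m := by
  induction m with
  | zero => simp [div_self (hf 0)]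
  | succ m ih =>
      rw [prod_range_succ, ih]; rw [div_mul_div_comm, mul_comm (f m) (f (m+1)), mul_div_mul_right _ _ (hf m)]


/-- the full cyclic product `A` in its "even-base" form -/
noncomputable def Aev (n : ℕ) {K : Type*} [Field K] (α φ : ZMod (2*n+2) → K)
    (x : ZMod (2*n+2)) : K :=
  ∏ k ∈ range (n+1), (α (x + 2*k) / φ (x + 2*k)) * φ (x + 2*k + 1)

/-- the full cyclic product `A` in its "odd-base" form -/
noncomputable def Aod (n : ℕ) {K : Type*} [Field K] (α φ : ZMod (2*n+2) → K)
    (x : ZMod (2*n+2)) : K :=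
  ∏ k ∈ range (n+1), φ (x + 2*k) * (α (x + 2*k + 1) / φ (x + 2*k + 1))

variable {n : ℕ} {K : Type*} [Field K]

lemma wrap (x : ZMod (2*n+2)) : x + 2*((n+1 : ℕ) : ZMod (2*n+2)) = x := by
  have h := ZMod.natCast_self (2*n+2)
  push_cast at h ⊢
  linear_combination h

/-- `Sev x = (1 - A) + (α x / φ x) * Sod (x+1)` -/
lemma L2 (α φ : ZMod (2*n+2) → K) (x : ZMod (2*n+2)) :
    Sev n α φ x = (1 - Aev n α φ x) + (α x / φ x) * Sod n α φ (x+1) := by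
  set R : ℕ → K := fun j => ∏ k ∈ range j, (α (x+2*k) / φ (x+2*k)) * φ (x+2*k+1) with hR
  have hs : ∀ j : ℕ, R (j+1) = R j * ((α (x+2*(j:ℕ)) / φ (x+2*(j:ℕ))) * φ (x+2*(j:ℕ)+1)) :=
    fun j => Finset.prod_range_succ _ j
  have key : ∀ j : ℕ,
      (α x / φ x) * ∏ k ∈ range j, φ (x+1+2*k) * (α (x+1+2*k+1) / φ (x+1+2*k+1))
        = R j * (α (x+2*(j:ℕ)) / φ (x+2*(j:ℕ))) := by
    intro j
    induction j with
    | zero => simp [hR]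
    | succ j ih =>
        rw [prod_range_succ, ← mul_assoc, ih, hs j]
        have e1 : x+1+2*(j:ℕ) = x + 2*(j:ℕ) + 1 := by push_cast; ring
        have e2 : x+2*(j:ℕ)+1+1 = x + 2*((j+1:ℕ) : ZMod (2*n+2)) := by push_cast; ring
        rw [e1, e2]
        ring
  have hSod : (α x / φ x) * Sod n α φ (x+1)
      = ∑ j ∈ range (n+1), (R j * (α (x+2*(j:ℕ)) / φ (x+2*(j:ℕ))) + R (j+1)) := by
    unfold Sod
    rw [mul_sum]
    refine sum_congr rfl fun j _ => ?_
    rw [← mul_assoc, key j, hs j]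
    have e1 : x+1+2*(j:ℕ) = x + 2*(j:ℕ) + 1 := by push_cast; ring
    rw [e1]
    ring
  have hSev : Sev n α φ x
      = ∑ j ∈ range (n+1), (R j + R j * (α (x+2*(j:ℕ)) / φ (x+2*(j:ℕ)))) := by
    unfold Sev
    refine sum_congr rfl fun j _ => ?_
    show R j * _ = R j + R j * _
    ring
  have hA : Aev n α φ x = R (n+1) := rfl
  have h0 : R 0 = 1 := by simp [hR]
  calc Sev n α φ x
      = ∑ j ∈ range (n+1), ((R j * (α (x+2*(j:ℕ)) / φ (x+2*(j:ℕ))) + R (j+1)) + (R j - R (j+1))) := by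
        rw [hSev]; refine sum_congr rfl fun j _ => ?_; ring
    _ = (∑ j ∈ range (n+1), (R j * (α (x+2*(j:ℕ)) / φ (x+2*(j:ℕ))) + R (j+1)))
        + ∑ j ∈ range (n+1), (R j - R (j+1)) := by rw [sum_add_distrib]
    _ = (1 - Aev n α φ x) + (α x / φ x) * Sod n α φ (x+1) := by
        rw [Finset.sum_range_sub' R (n+1), hSod, h0, hA]; ring

/-- `Sod x = (1 - A') + φ x * Sev (x+1)` -/
lemma L3 (α φ : ZMod (2*n+2) → K) (x : ZMod (2*n+2)) :
    Sod n α φ x = (1 - Aod n α φ x) + φ x * Sev n α φ (x+1) := by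
  set P : ℕ → K := fun j => ∏ k ∈ range j, φ (x+2*k) * (α (x+2*k+1) / φ (x+2*k+1)) with hP
  have hs : ∀ j : ℕ, P (j+1) = P j * (φ (x+2*(j:ℕ)) * (α (x+2*(j:ℕ)+1) / φ (x+2*(j:ℕ)+1))) :=
    fun j => Finset.prod_range_succ _ j
  have key : ∀ j : ℕ,
      φ x * ∏ k ∈ range j, (α (x+1+2*k) / φ (x+1+2*k)) * φ (x+1+2*k+1)
        = P j * φ (x+2*(j:ℕ)) := by
    intro j
    induction j with
    | zero => simp [hP]
    | succ j ih =>
        rw [prod_range_succ, ← mul_assoc, ih, hs j]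
        have e1 : x+1+2*(j:ℕ) = x + 2*(j:ℕ) + 1 := by push_cast; ring
        have e2 : x+2*(j:ℕ)+1+1 = x + 2*((j+1:ℕ) : ZMod (2*n+2)) := by push_cast; ring
        rw [e1, e2]
        ring
  have hSev : φ x * Sev n α φ (x+1)
      = ∑ j ∈ range (n+1), (P j * φ (x+2*(j:ℕ)) + P (j+1)) := by
    unfold Sev
    rw [mul_sum]
    refine sum_congr rfl fun j _ => ?_
    rw [← mul_assoc, key j, hs j]
    have e1 : x+1+2*(j:ℕ) = x + 2*(j:ℕ) + 1 := by push_cast; ring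
    rw [e1]
    ring
  have hSod : Sod n α φ x
      = ∑ j ∈ range (n+1), (P j + P j * φ (x+2*(j:ℕ))) := by
    unfold Sod
    refine sum_congr rfl fun j _ => ?_
    show P j * _ = P j + P j * _
    ring
  have hA : Aod n α φ x = P (n+1) := rfl
  have h0 : P 0 = 1 := by simp [hP]
  calc Sod n α φ x
      = ∑ j ∈ range (n+1), ((P j * φ (x+2*(j:ℕ)) + P (j+1)) + (P j - P (j+1))) := by
        rw [hSod]; refine sum_congr rfl fun j _ => ?_; ring
    _ = (∑ j ∈ range (n+1), (P j * φ (x+2*(j:ℕ)) + P (j+1)))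
        + ∑ j ∈ range (n+1), (P j - P (j+1)) := by rw [sum_add_distrib]
    _ = (1 - Aod n α φ x) + φ x * Sev n α φ (x+1) := by
        rw [Finset.sum_range_sub' P (n+1), hSev, h0, hA]; ring

section Shifts
variable (α φ : ZMod (2*n+2) → K)

/-- `A` doesn't change when the base moves from odd-form at `x+1` to even-form at `x`. -/
lemma LA (hα : ∀ i, α i ≠ 0) (hφ : ∀ i, φ i ≠ 0) (x : ZMod (2*n+2)) :
    Aod n α φ (x+1) = Aev n α φ x := by
  have h1 : Aod n α φ (x+1)
      = ∏ k ∈ range (n+1), φ (x+2*k+1) * (α (x+2*((k+1:ℕ):ZMod (2*n+2))) / φ (x+2*((k+1:ℕ):ZMod (2*n+2)))) := by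
    unfold Aod
    refine prod_congr rfl fun k _ => ?_
    have e1 : x+1+2*(k:ℕ) = x+2*(k:ℕ)+1 := by push_cast; ring
    have e2 : x+2*(k:ℕ)+1+1 = x + 2*((k+1:ℕ) : ZMod (2*n+2)) := by push_cast; ring
    rw [e1, e2]
  rw [h1, prod_mul_distrib]
  have h2 : (∏ k ∈ range (n+1), (fun j : ℕ => α (x+2*(j:ℕ)) / φ (x+2*(j:ℕ))) (k+1))
      = ∏ k ∈ range (n+1), α (x+2*(k:ℕ)) / φ (x+2*(k:ℕ)) := by
    refine prod_shift (fun k : ℕ => α (x+2*(k:ℕ)) / φ (x+2*(k:ℕ))) (n+1) ?_ ?_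
    · show α (x+2*((n+1:ℕ):ZMod (2*n+2))) / φ _ = _
      rw [wrap]
      norm_num
    · show α (x+2*((0:ℕ):ZMod (2*n+2))) / φ _ ≠ 0
      exact div_ne_zero (hα _) (hφ _)
  rw [h2]
  unfold Aev
  rw [prod_mul_distrib]
  ring

/-- `Aev` is invariant under shifting the base by 2. -/
lemma LBev (hα : ∀ i, α i ≠ 0) (hφ : ∀ i, φ i ≠ 0) (x : ZMod (2*n+2)) :
    Aev n α φ (x+2) = Aev n α φ x := by
  have h1 : Aev n α φ (x+2)
      = ∏ k ∈ range (n+1), (fun j : ℕ => (α (x+2*(j:ℕ)) / φ (x+2*(j:ℕ))) * φ (x+2*(j:ℕ)+1)) (k+1) := by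
    unfold Aev
    refine prod_congr rfl fun k _ => ?_
    have e1 : x+2+2*(k:ℕ) = x+2*((k+1:ℕ):ZMod (2*n+2)) := by push_cast; ring
    rw [e1]
  rw [h1]
  rw [prod_shift (fun j : ℕ => (α (x+2*(j:ℕ)) / φ (x+2*(j:ℕ))) * φ (x+2*(j:ℕ)+1)) (n+1)
    (by show (α (x+2*((n+1:ℕ):ZMod (2*n+2))) / φ _) * φ _ = _; rw [wrap]; norm_num)
    (by show (α (x+2*((0:ℕ):ZMod (2*n+2))) / φ _) * φ _ ≠ 0
        exact mul_ne_zero (div_ne_zero (hα _) (hφ _)) (hφ _))]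
  rfl

/-- `Aod` is invariant under shifting the base by 2. -/
lemma LBod (hα : ∀ i, α i ≠ 0) (hφ : ∀ i, φ i ≠ 0) (x : ZMod (2*n+2)) :
    Aod n α φ (x+2) = Aod n α φ x := by
  have h1 : Aod n α φ (x+2)
      = ∏ k ∈ range (n+1), (fun j : ℕ => φ (x+2*(j:ℕ)) * (α (x+2*(j:ℕ)+1) / φ (x+2*(j:ℕ)+1))) (k+1) := by
    unfold Aod
    refine prod_congr rfl fun k _ => ?_
    have e1 : x+2+2*(k:ℕ) = x+2*((k+1:ℕ):ZMod (2*n+2)) := by push_cast; ring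
    rw [e1]
  rw [h1]
  rw [prod_shift (fun j : ℕ => φ (x+2*(j:ℕ)) * (α (x+2*(j:ℕ)+1) / φ (x+2*(j:ℕ)+1))) (n+1)
    (by show φ (x+2*((n+1:ℕ):ZMod (2*n+2))) * _ = _; rw [wrap]; norm_num)
    (by show φ (x+2*((0:ℕ):ZMod (2*n+2))) * _ ≠ 0
        exact mul_ne_zero (hφ _) (div_ne_zero (hα _) (hφ _)))]
  rfl

lemma Aev_shift (hα : ∀ i, α i ≠ 0) (hφ : ∀ i, φ i ≠ 0) (x : ZMod (2*n+2)) (j : ℕ) :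
    Aev n α φ (x+2*(j:ℕ)) = Aev n α φ x := by
  induction j with
  | zero => norm_num
  | succ j ih =>
      have e : x+2*((j+1:ℕ) : ZMod (2*n+2)) = (x+2*(j:ℕ))+2 := by push_cast; ring
      rw [e, LBev α φ hα hφ, ih]

lemma Aod_shift (hα : ∀ i, α i ≠ 0) (hφ : ∀ i, φ i ≠ 0) (x : ZMod (2*n+2)) (j : ℕ) :
    Aod n α φ (x+2*(j:ℕ)) = Aod n α φ x := by
  induction j with
  | zero => norm_num
  | succ j ih =>
      have e : x+2*((j+1:ℕ) : ZMod (2*n+2)) = (x+2*(j:ℕ))+2 := by push_cast; ring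
      rw [e, LBod α φ hα hφ, ih]

lemma Aev_ne (hα : ∀ i, α i ≠ 0) (hφ : ∀ i, φ i ≠ 0) (x : ZMod (2*n+2)) : Aev n α φ x ≠ 0 :=
  prod_ne_zero_iff.mpr fun k _ => mul_ne_zero (div_ne_zero (hα _) (hφ _)) (hφ _)

lemma Aod_ne (hα : ∀ i, α i ≠ 0) (hφ : ∀ i, φ i ≠ 0) (x : ZMod (2*n+2)) : Aod n α φ x ≠ 0 :=
  prod_ne_zero_iff.mpr fun k _ => mul_ne_zero (hφ _) (div_ne_zero (hα _) (hφ _))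

/-- `Aev x` written as a product over the "edges" `p_k r_{k+1}`. -/
lemma Aev_pr (hα : ∀ i, α i ≠ 0) (hφ : ∀ i, φ i ≠ 0) (x : ZMod (2*n+2)) :
    Aev n α φ x = ∏ k ∈ range (n+1),
      φ (x+2*k+1) * (α (x+2*((k+1:ℕ):ZMod (2*n+2))) / φ (x+2*((k+1:ℕ):ZMod (2*n+2)))) := by
  rw [← LA α φ hα hφ x]
  unfold Aod
  refine prod_congr rfl fun k _ => ?_
  have e1 : x+1+2*(k:ℕ) = x+2*(k:ℕ)+1 := by push_cast; ring
  have e2 : x+2*(k:ℕ)+1+1 = x + 2*((k+1:ℕ) : ZMod (2*n+2)) := by push_cast; ring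
  rw [e1, e2]

end Shifts

section Psi
variable (α φ : ZMod (2*n+2) → K)

lemma s1φ_even {x : ZMod (2*n+2)} (hx : Even x.val) :
    s1φ n α φ x = α x * φ (x+1) * Sev n α φ (x+2) / Sev n α φ x := if_pos hx

lemma s1φ_odd {x : ZMod (2*n+2)} (hx : ¬ Even x.val) :
    s1φ n α φ x = (φ (x+1) / α (x+1)) * Sod n α φ x / Sod n α φ (x+2) := if_neg hx

lemma psi_ne (hα : ∀ i, α i ≠ 0) (hφ : ∀ i, φ i ≠ 0)
    (hSe : ∀ x, Sev n α φ x ≠ 0) (hSo : ∀ x, Sod n α φ x ≠ 0) (x : ZMod (2*n+2)) :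
    s1φ n α φ x ≠ 0 := by
  unfold s1φ
  split
  · exact div_ne_zero (mul_ne_zero (mul_ne_zero (hα _) (hφ _)) (hSe _)) (hSe _)
  · exact div_ne_zero (mul_ne_zero (div_ne_zero (hφ _) (hα _)) (hSo _)) (hSo _)

/-- ratio `α/ψ` at an even point `u + 2k` (with `u` even). -/
lemma psi_ratio_even (hα : ∀ i, α i ≠ 0) (hφ : ∀ i, φ i ≠ 0)
    (hSe : ∀ x, Sev n α φ x ≠ 0)
    {u : ZMod (2*n+2)} (hu : Even u.val) (k : ℕ) :
    α (u+2*(k:ℕ)) / s1φ n α φ (u+2*(k:ℕ))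
      = Sev n α φ (u+2*(k:ℕ)) / (φ (u+2*(k:ℕ)+1) * Sev n α φ (u+2*((k+1:ℕ):ZMod (2*n+2)))) := by
  rw [s1φ_even α φ (parity_even_shift u hu k)]
  have e2 : u+2*(k:ℕ)+2 = u+2*((k+1:ℕ):ZMod (2*n+2)) := by push_cast; ring
  rw [e2]
  rw [div_div_eq_mul_div, div_eq_div_iff]
  · ring
  · exact mul_ne_zero (mul_ne_zero (hα _) (hφ _)) (hSe _)
  · exact mul_ne_zero (hφ _) (hSe _)

/-- value of `ψ` at an odd point `u + 2k + 1` (with `u` even). -/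
lemma psi_odd_val {u : ZMod (2*n+2)} (hu : Even u.val) (k : ℕ) :
    s1φ n α φ (u+2*(k:ℕ)+1)
      = (φ (u+2*((k+1:ℕ):ZMod (2*n+2))) / α (u+2*((k+1:ℕ):ZMod (2*n+2))))
          * Sod n α φ (u+2*(k:ℕ)+1) / Sod n α φ (u+2*((k+1:ℕ):ZMod (2*n+2))+1) := by
  rw [s1φ_odd α φ (parity_odd_shift u hu k)]
  have e1 : u+2*(k:ℕ)+1+1 = u+2*((k+1:ℕ):ZMod (2*n+2)) := by push_cast; ring
  have e2 : u+2*(k:ℕ)+1+2 = u+2*((k+1:ℕ):ZMod (2*n+2))+1 := by push_cast; ring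
  rw [e1, e2]

/-- value of `ψ` at an odd point `v + 2k` (with `v` odd). -/
lemma psi_odd_val' {v : ZMod (2*n+2)} (hv : ¬ Even v.val) (k : ℕ) :
    s1φ n α φ (v+2*(k:ℕ))
      = (φ (v+2*(k:ℕ)+1) / α (v+2*(k:ℕ)+1))
          * Sod n α φ (v+2*(k:ℕ)) / Sod n α φ (v+2*((k+1:ℕ):ZMod (2*n+2))) := by
  have hpar : ¬ Even (v+2*(k:ℕ)).val := fun h => hv ((parity_shift_iff v k).mp h)
  rw [s1φ_odd α φ hpar]
  have e2 : v+2*(k:ℕ)+2 = v+2*((k+1:ℕ):ZMod (2*n+2)) := by push_cast; ring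
  rw [e2]

/-- ratio `α/ψ` at an even point `v + 2k + 1` (with `v` odd). -/
lemma psi_ratio_even' (hα : ∀ i, α i ≠ 0) (hφ : ∀ i, φ i ≠ 0)
    (hSe : ∀ x, Sev n α φ x ≠ 0)
    {v : ZMod (2*n+2)} (hv : ¬ Even v.val) (k : ℕ) :
    α (v+2*(k:ℕ)+1) / s1φ n α φ (v+2*(k:ℕ)+1)
      = Sev n α φ (v+2*(k:ℕ)+1)
          / (φ (v+2*((k+1:ℕ):ZMod (2*n+2))) * Sev n α φ (v+2*((k+1:ℕ):ZMod (2*n+2))+1)) := by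
  have hpar : Even (v+2*(k:ℕ)+1).val := by
    rw [parity_shift_odd_iff]; exact hv
  rw [s1φ_even α φ hpar]
  have e1 : v+2*(k:ℕ)+1+1 = v+2*((k+1:ℕ):ZMod (2*n+2)) := by push_cast; ring
  have e2 : v+2*(k:ℕ)+1+2 = v+2*((k+1:ℕ):ZMod (2*n+2))+1 := by push_cast; ring
  rw [e1, e2]
  rw [div_div_eq_mul_div, div_eq_div_iff]
  · ring
  · exact mul_ne_zero (mul_ne_zero (hα _) (hφ _)) (hSe _)
  · exact mul_ne_zero (hφ _) (hSe _)

end Psi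

/-- pure field identity for one telescoping step (even case) -/
lemma keyfield {K : Type*} [Field K] (A Q S0O0 Sj Sj1 Oj pj rj rj1 : K)
    (h1 : Sj = (1-A) + rj*Oj) (h2 : Oj = (1-A) + pj*Sj1)
    (hSj1 : Sj1 ≠ 0) (hOj : Oj ≠ 0) (hpj : pj ≠ 0) (hrj1 : rj1 ≠ 0) (hSj : Sj ≠ 0) :
    A * (1-A) * ((S0O0 * Q / (Sj * Oj)) * (1 + Sj/(pj*Sj1)))
      = A * (Q * (pj*rj1)⁻¹) * rj1 * S0O0 / Sj1 - A * Q * rj * S0O0 / Sj := by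
  subst h1
  subst h2
  field_simp
  ring

/-- pure field identity for one step of the partial-product closed form -/
lemma Cstep {K : Type*} [Field K] (S0O0 Qj Sej Sej1 Soj Soj1 pj a2 f2 : K)
    (hSej : Sej ≠ 0) (hSoj : Soj ≠ 0) (hSej1 : Sej1 ≠ 0) (hSoj1 : Soj1 ≠ 0)
    (hpj : pj ≠ 0) (ha2 : a2 ≠ 0) (hf2 : f2 ≠ 0) :
    (S0O0 * Qj / (Sej * Soj)) * ((Sej / (pj * Sej1)) * ((f2/a2) * Soj / Soj1))
      = S0O0 * (Qj * (pj * (a2/f2))⁻¹) / (Sej1 * Soj1) := by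
  field_simp

/-- pure field identity for one step of the partial-product closed form, odd case -/
lemma Cstep' {K : Type*} [Field K] (SO Qj Soj Sej Soj1 Sej1 a1 f1 q1 : K)
    (hSoj : Soj ≠ 0) (hSej : Sej ≠ 0) (hSoj1 : Soj1 ≠ 0) (hSej1 : Sej1 ≠ 0)
    (hf1 : f1 ≠ 0) (ha1 : a1 ≠ 0) (hq1 : q1 ≠ 0) :
    (SO * Qj / (Soj * Sej)) * (((f1/a1) * Soj / Soj1) * (Sej / (q1 * Sej1)))
      = SO * (Qj * ((a1/f1) * q1)⁻¹) / (Soj1 * Sej1) := by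
  field_simp

/-- pure field identity for one telescoping step (odd case) -/
lemma keyfield' {K : Type*} [Field K] (A Q SO Soj Soj1 Sej a1 f1 qj q1 : K)
    (h1 : Soj = (1-A) + qj*Sej) (h2 : Sej = (1-A) + (a1/f1)*Soj1)
    (hSoj1 : Soj1 ≠ 0) (hSej : Sej ≠ 0) (ha1 : a1 ≠ 0) (hf1 : f1 ≠ 0) (hq1 : q1 ≠ 0)
    (hSoj : Soj ≠ 0) :
    A * (1-A) * ((SO * Q / (Soj * Sej)) * (1 + (f1/a1) * Soj / Soj1))
      = A * (Q * ((a1/f1) * q1)⁻¹) * q1 * SO / Soj1 - A * Q * qj * SO / Soj := by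
  have h := keyfield A Q SO Soj Soj1 Sej (a1/f1) qj q1 h1 h2 hSoj1 hSej
    (div_ne_zero ha1 hf1) hq1 hSoj
  have e : Soj / ((a1/f1) * Soj1) = (f1/a1) * Soj / Soj1 := by
    field_simp
  rw [← e]
  exact h

section KE
variable (α φ : ZMod (2*n+2) → K)

/-- The key telescoping identity: `A(1-A)·Sev' u · φ u = (1-A)·α u·Sod (u+1)` for even `u`. -/
lemma KE (hα : ∀ i, α i ≠ 0) (hφ : ∀ i, φ i ≠ 0)
    (hSe : ∀ x, Sev n α φ x ≠ 0) (hSo : ∀ x, Sod n α φ x ≠ 0)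
    {u : ZMod (2*n+2)} (hu : Even u.val) :
    Aev n α φ u * (1 - Aev n α φ u) * Sev n α (s1φ n α φ) u * φ u
      = (1 - Aev n α φ u) * (α u * Sod n α φ (u+1)) := by
  set ψ := s1φ n α φ with hψdef
  set A := Aev n α φ u with hAdef
  set Qf : ℕ → K := fun j => ∏ k ∈ range j,
      (φ (u+2*(k:ℕ)+1) * (α (u+2*((k+1:ℕ):ZMod (2*n+2))) / φ (u+2*((k+1:ℕ):ZMod (2*n+2)))))⁻¹
    with hQ
  set Gf : ℕ → K := fun j => A * Qf j * (α (u+2*(j:ℕ)) / φ (u+2*(j:ℕ)))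
      * (Sev n α φ u * Sod n α φ (u+1)) / Sev n α φ (u+2*(j:ℕ)) with hG
  have hpr : ∀ k : ℕ,
      (φ (u+2*(k:ℕ)+1) * (α (u+2*((k+1:ℕ):ZMod (2*n+2))) / φ (u+2*((k+1:ℕ):ZMod (2*n+2))))) ≠ 0 :=
    fun k => mul_ne_zero (hφ _) (div_ne_zero (hα _) (hφ _))
  have hQs : ∀ j : ℕ, Qf (j+1) = Qf j *
      (φ (u+2*(j:ℕ)+1) * (α (u+2*((j+1:ℕ):ZMod (2*n+2))) / φ (u+2*((j+1:ℕ):ZMod (2*n+2)))))⁻¹ :=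
    fun j => Finset.prod_range_succ _ j
  -- the two step-one recurrences with constant A
  have hF3 : ∀ j : ℕ, Sev n α φ (u+2*(j:ℕ))
      = (1-A) + (α (u+2*(j:ℕ)) / φ (u+2*(j:ℕ))) * Sod n α φ (u+2*(j:ℕ)+1) := by
    intro j
    have h := L2 α φ (u+2*(j:ℕ))
    rwa [Aev_shift α φ hα hφ u j, ← hAdef] at h
  have hF4 : ∀ j : ℕ, Sod n α φ (u+2*(j:ℕ)+1)
      = (1-A) + φ (u+2*(j:ℕ)+1) * Sev n α φ (u+2*((j+1:ℕ):ZMod (2*n+2))) := by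
    intro j
    have h := L3 α φ (u+2*(j:ℕ)+1)
    have e1 : u+2*(j:ℕ)+1 = (u+1)+2*(j:ℕ) := by ring
    have e2 : u+2*(j:ℕ)+1+1 = u+2*((j+1:ℕ):ZMod (2*n+2)) := by push_cast; ring
    rw [e2] at h
    rw [h]
    congr 2
    rw [e1, Aod_shift α φ hα hφ (u+1) j, LA α φ hα hφ u]
  -- Q (n+1) * A = 1
  have hQA : Qf (n+1) * A = 1 := by
    rw [hAdef, Aev_pr α φ hα hφ u, hQ, ← prod_mul_distrib]
    rw [prod_congr rfl fun k _ => inv_mul_cancel₀ (hpr k)]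
    exact prod_const_one
  -- closed form of the partial products
  have hC : ∀ j : ℕ, (∏ k ∈ range j, (α (u+2*(k:ℕ)) / ψ (u+2*(k:ℕ))) * ψ (u+2*(k:ℕ)+1))
      = (Sev n α φ u * Sod n α φ (u+1)) * Qf j / (Sev n α φ (u+2*(j:ℕ)) * Sod n α φ (u+2*(j:ℕ)+1)) := by
    intro j
    induction j with
    | zero =>
        norm_num
        rw [div_self (mul_ne_zero (hSe _) (hSo _))]
    | succ j ih =>
        rw [prod_range_succ, ih, hψdef, psi_ratio_even α φ hα hφ hSe hu j, psi_odd_val α φ hu j,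
          hQs j]
        exact Cstep _ _ _ _ _ _ _ _ _ (hSe _) (hSo _) (hSe _) (hSo _) (hφ _) (hα _) (hφ _)
  -- the telescoping step
  have hterm : ∀ j : ℕ, A * (1-A) *
      ((∏ k ∈ range j, (α (u+2*(k:ℕ)) / ψ (u+2*(k:ℕ))) * ψ (u+2*(k:ℕ)+1))
        * (1 + α (u+2*(j:ℕ)) / ψ (u+2*(j:ℕ))))
      = Gf (j+1) - Gf j := by
    intro j
    rw [hC j, hψdef, psi_ratio_even α φ hα hφ hSe hu j]
    have key := keyfield A (Qf j) (Sev n α φ u * Sod n α φ (u+1))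
      (Sev n α φ (u+2*(j:ℕ))) (Sev n α φ (u+2*((j+1:ℕ):ZMod (2*n+2))))
      (Sod n α φ (u+2*(j:ℕ)+1)) (φ (u+2*(j:ℕ)+1))
      (α (u+2*(j:ℕ)) / φ (u+2*(j:ℕ)))
      (α (u+2*((j+1:ℕ):ZMod (2*n+2))) / φ (u+2*((j+1:ℕ):ZMod (2*n+2))))
      (hF3 j) (hF4 j) (hSe _) (hSo _) (hφ _) (div_ne_zero (hα _) (hφ _)) (hSe _)
    simp only [hG, hQs j]
    linear_combination key
  -- summing up
  have hexp : Sev n α ψ u = ∑ j ∈ range (n+1),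
      ((∏ k ∈ range j, (α (u+2*(k:ℕ)) / ψ (u+2*(k:ℕ))) * ψ (u+2*(k:ℕ)+1))
        * (1 + α (u+2*(j:ℕ)) / ψ (u+2*(j:ℕ)))) := rfl
  have hsum : A * (1-A) * Sev n α ψ u = Gf (n+1) - Gf 0 := by
    rw [hexp, mul_sum]
    rw [sum_congr rfl fun j _ => hterm j]
    exact Finset.sum_range_sub Gf (n+1)
  have h0 : u + 2*((0:ℕ) : ZMod (2*n+2)) = u := by norm_num
  have hQ0 : Qf 0 = 1 := rfl
  have hGn1 : Gf (n+1) = (α u / φ u) * Sod n α φ (u+1) := by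
    simp only [hG]
    rw [wrap u]
    rw [show A * Qf (n+1) * (α u / φ u) * (Sev n α φ u * Sod n α φ (u+1)) / Sev n α φ u
        = (Qf (n+1) * A) * ((α u / φ u) * Sod n α φ (u+1)) * (Sev n α φ u / Sev n α φ u) by ring,
      hQA, div_self (hSe u)]
    ring
  have hG0 : Gf 0 = A * ((α u / φ u) * Sod n α φ (u+1)) := by
    simp only [hG, hQ0]
    rw [h0]
    rw [show A * 1 * (α u / φ u) * (Sev n α φ u * Sod n α φ (u+1)) / Sev n α φ u
        = A * ((α u / φ u) * Sod n α φ (u+1)) * (Sev n α φ u / Sev n α φ u) by ring,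
      div_self (hSe u)]
    ring
  have final : A * (1-A) * Sev n α ψ u = (1-A) * ((α u / φ u) * Sod n α φ (u+1)) := by
    rw [hsum, hGn1, hG0]
    ring
  calc A * (1-A) * Sev n α ψ u * φ u
      = (1-A) * ((α u / φ u) * Sod n α φ (u+1)) * φ u := by rw [final]
    _ = (1-A) * (α u * Sod n α φ (u+1)) * (φ u / φ u) := by ring
    _ = (1-A) * (α u * Sod n α φ (u+1)) := by rw [div_self (hφ u)]; ring
end KE

section KO
variable (α φ : ZMod (2*n+2) → K)

/-- `Aod x` written as a product over the "edges" `s_k q_{k+1}`. -/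
lemma Aod_pr (hα : ∀ i, α i ≠ 0) (hφ : ∀ i, φ i ≠ 0) (x : ZMod (2*n+2)) :
    Aod n α φ x = ∏ k ∈ range (n+1),
      (α (x+2*k+1) / φ (x+2*k+1)) * φ (x+2*((k+1:ℕ):ZMod (2*n+2))) := by
  have e0 : Aod n α φ x = Aev n α φ (x+1) := by
    rw [← LA α φ hα hφ (x+1), show x+1+1 = x+2 by ring, LBod α φ hα hφ x]
  rw [e0]
  unfold Aev
  refine prod_congr rfl fun k _ => ?_
  have e1 : x+1+2*(k:ℕ) = x+2*(k:ℕ)+1 := by push_cast; ring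
  have e2 : x+2*(k:ℕ)+1+1 = x + 2*((k+1:ℕ) : ZMod (2*n+2)) := by push_cast; ring
  rw [e1, e2]

/-- The key telescoping identity, odd case: `A(1-A)·Sod' v = (1-A)·φ v·Sev (v+1)` for odd `v`. -/
lemma KO (hα : ∀ i, α i ≠ 0) (hφ : ∀ i, φ i ≠ 0)
    (hSe : ∀ x, Sev n α φ x ≠ 0) (hSo : ∀ x, Sod n α φ x ≠ 0)
    {v : ZMod (2*n+2)} (hv : ¬ Even v.val) :
    Aod n α φ v * (1 - Aod n α φ v) * Sod n α (s1φ n α φ) v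
      = (1 - Aod n α φ v) * (φ v * Sev n α φ (v+1)) := by
  set ψ := s1φ n α φ with hψdef
  set A := Aod n α φ v with hAdef
  set Qf : ℕ → K := fun j => ∏ k ∈ range j,
      ((α (v+2*(k:ℕ)+1) / φ (v+2*(k:ℕ)+1)) * φ (v+2*((k+1:ℕ):ZMod (2*n+2))))⁻¹
    with hQ
  set Gf : ℕ → K := fun j => A * Qf j * φ (v+2*(j:ℕ))
      * (Sod n α φ v * Sev n α φ (v+1)) / Sod n α φ (v+2*(j:ℕ)) with hG
  have hpr : ∀ k : ℕ,
      ((α (v+2*(k:ℕ)+1) / φ (v+2*(k:ℕ)+1)) * φ (v+2*((k+1:ℕ):ZMod (2*n+2)))) ≠ 0 :=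
    fun k => mul_ne_zero (div_ne_zero (hα _) (hφ _)) (hφ _)
  have hQs : ∀ j : ℕ, Qf (j+1) = Qf j *
      ((α (v+2*(j:ℕ)+1) / φ (v+2*(j:ℕ)+1)) * φ (v+2*((j+1:ℕ):ZMod (2*n+2))))⁻¹ :=
    fun j => Finset.prod_range_succ _ j
  have hF3 : ∀ j : ℕ, Sod n α φ (v+2*(j:ℕ))
      = (1-A) + φ (v+2*(j:ℕ)) * Sev n α φ (v+2*(j:ℕ)+1) := by
    intro j
    have h := L3 α φ (v+2*(j:ℕ))
    rwa [Aod_shift α φ hα hφ v j, ← hAdef] at h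
  have hF4 : ∀ j : ℕ, Sev n α φ (v+2*(j:ℕ)+1)
      = (1-A) + (α (v+2*(j:ℕ)+1) / φ (v+2*(j:ℕ)+1)) * Sod n α φ (v+2*((j+1:ℕ):ZMod (2*n+2))) := by
    intro j
    have h := L2 α φ (v+2*(j:ℕ)+1)
    have e2 : v+2*(j:ℕ)+1+1 = v+2*((j+1:ℕ):ZMod (2*n+2)) := by push_cast; ring
    rw [e2] at h
    rw [h]
    congr 2
    rw [← LA α φ hα hφ (v+2*(j:ℕ)+1), e2, Aod_shift α φ hα hφ v (j+1)]
  have hQA : Qf (n+1) * A = 1 := by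
    rw [hAdef, Aod_pr α φ hα hφ v, hQ, ← prod_mul_distrib]
    rw [prod_congr rfl fun k _ => inv_mul_cancel₀ (hpr k)]
    exact prod_const_one
  have hC : ∀ j : ℕ, (∏ k ∈ range j, ψ (v+2*(k:ℕ)) * (α (v+2*(k:ℕ)+1) / ψ (v+2*(k:ℕ)+1)))
      = (Sod n α φ v * Sev n α φ (v+1)) * Qf j
          / (Sod n α φ (v+2*(j:ℕ)) * Sev n α φ (v+2*(j:ℕ)+1)) := by
    intro j
    induction j with
    | zero =>
        norm_num
        rw [div_self (mul_ne_zero (hSo _) (hSe _))]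
    | succ j ih =>
        rw [prod_range_succ, ih, hψdef, psi_odd_val' α φ hv j, psi_ratio_even' α φ hα hφ hSe hv j,
          hQs j]
        exact Cstep' _ _ _ _ _ _ _ _ _ (hSo _) (hSe _) (hSo _) (hSe _) (hφ _) (hα _) (hφ _)
  have hterm : ∀ j : ℕ, A * (1-A) *
      ((∏ k ∈ range j, ψ (v+2*(k:ℕ)) * (α (v+2*(k:ℕ)+1) / ψ (v+2*(k:ℕ)+1)))
        * (1 + ψ (v+2*(j:ℕ))))
      = Gf (j+1) - Gf j := by
    intro j
    rw [hC j, hψdef, psi_odd_val' α φ hv j]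
    have key := keyfield' A (Qf j) (Sod n α φ v * Sev n α φ (v+1))
      (Sod n α φ (v+2*(j:ℕ))) (Sod n α φ (v+2*((j+1:ℕ):ZMod (2*n+2))))
      (Sev n α φ (v+2*(j:ℕ)+1))
      (α (v+2*(j:ℕ)+1)) (φ (v+2*(j:ℕ)+1)) (φ (v+2*(j:ℕ)))
      (φ (v+2*((j+1:ℕ):ZMod (2*n+2))))
      (hF3 j) (hF4 j) (hSo _) (hSe _) (hα _) (hφ _) (hφ _) (hSo _)
    simp only [hG, hQs j]
    linear_combination key
  have hexp : Sod n α ψ v = ∑ j ∈ range (n+1),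
      ((∏ k ∈ range j, ψ (v+2*(k:ℕ)) * (α (v+2*(k:ℕ)+1) / ψ (v+2*(k:ℕ)+1)))
        * (1 + ψ (v+2*(j:ℕ)))) := rfl
  have hsum : A * (1-A) * Sod n α ψ v = Gf (n+1) - Gf 0 := by
    rw [hexp, mul_sum]
    rw [sum_congr rfl fun j _ => hterm j]
    exact Finset.sum_range_sub Gf (n+1)
  have h0 : v + 2*((0:ℕ) : ZMod (2*n+2)) = v := by norm_num
  have hQ0 : Qf 0 = 1 := rfl
  have hGn1 : Gf (n+1) = φ v * Sev n α φ (v+1) := by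
    simp only [hG]
    rw [wrap v]
    rw [show A * Qf (n+1) * φ v * (Sod n α φ v * Sev n α φ (v+1)) / Sod n α φ v
        = (Qf (n+1) * A) * (φ v * Sev n α φ (v+1)) * (Sod n α φ v / Sod n α φ v) by ring,
      hQA, div_self (hSo v)]
    ring
  have hG0 : Gf 0 = A * (φ v * Sev n α φ (v+1)) := by
    simp only [hG, hQ0]
    rw [h0]
    rw [show A * 1 * φ v * (Sod n α φ v * Sev n α φ (v+1)) / Sod n α φ v
        = A * (φ v * Sev n α φ (v+1)) * (Sod n α φ v / Sod n α φ v) by ring,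
      div_self (hSo v)]
    ring
  rw [hsum, hGn1, hG0]
  ring
end KO

section AA
variable (α φ : ZMod (2*n+2) → K)

lemma AAstep {K : Type*} [Field K] (Sek Sek1 Sok Sok1 pk a2 f2 : K)
    (h1 : Sek1 ≠ 0) (h2 : Sok1 ≠ 0) (h3 : pk ≠ 0) (h4 : a2 ≠ 0) (h5 : f2 ≠ 0) :
    ((Sek/(pk*Sek1)) * ((f2/a2)*Sok/Sok1)) * (pk*(a2/f2)) = (Sek*Sok)/(Sek1*Sok1) := by
  field_simp

lemma AAstep' {K : Type*} [Field K] (Sok Sok1 Sek Sek1 a1 f1 q1 : K)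
    (h1 : Sok1 ≠ 0) (h2 : Sek1 ≠ 0) (h3 : a1 ≠ 0) (h4 : f1 ≠ 0) (h5 : q1 ≠ 0) :
    (((f1/a1)*Sok/Sok1) * (Sek/(q1*Sek1))) * ((a1/f1)*q1) = (Sok*Sek)/(Sok1*Sek1) := by
  field_simp

/-- `Ã · A = 1` at an even base. -/
lemma AA_even (hα : ∀ i, α i ≠ 0) (hφ : ∀ i, φ i ≠ 0)
    (hSe : ∀ x, Sev n α φ x ≠ 0) (hSo : ∀ x, Sod n α φ x ≠ 0)
    {x : ZMod (2*n+2)} (hx : Even x.val) :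
    Aev n α (s1φ n α φ) x * Aev n α φ x = 1 := by
  set ψ := s1φ n α φ with hψdef
  set f : ℕ → K := fun k => Sev n α φ (x+2*(k:ℕ)) * Sod n α φ (x+2*(k:ℕ)+1) with hfd
  have hf : ∀ k, f k ≠ 0 := fun k => mul_ne_zero (hSe _) (hSo _)
  rw [Aev_pr α φ hα hφ x]
  show (∏ k ∈ range (n+1), (α (x+2*(k:ℕ)) / ψ (x+2*(k:ℕ))) * ψ (x+2*(k:ℕ)+1)) * _ = 1
  rw [← prod_mul_distrib]
  have hfac : ∀ k ∈ range (n+1),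
      ((α (x+2*(k:ℕ)) / ψ (x+2*(k:ℕ))) * ψ (x+2*(k:ℕ)+1))
        * (φ (x+2*(k:ℕ)+1) * (α (x+2*((k+1:ℕ):ZMod (2*n+2))) / φ (x+2*((k+1:ℕ):ZMod (2*n+2)))))
      = f k / f (k+1) := by
    intro k _
    rw [hψdef, psi_ratio_even α φ hα hφ hSe hx k, psi_odd_val α φ hx k, hfd]
    exact AAstep _ _ _ _ _ _ _ (hSe _) (hSo _) (hφ _) (hα _) (hφ _)
  rw [prod_congr rfl hfac, prod_div_telescope f hf (n+1)]
  have hwrap : f (n+1) = f 0 := by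
    simp only [hfd]
    rw [wrap x]
    norm_num
  rw [hwrap, div_self (hf 0)]

/-- `Ã · A = 1` at an odd base. -/
lemma AA_odd (hα : ∀ i, α i ≠ 0) (hφ : ∀ i, φ i ≠ 0)
    (hSe : ∀ x, Sev n α φ x ≠ 0) (hSo : ∀ x, Sod n α φ x ≠ 0)
    {v : ZMod (2*n+2)} (hv : ¬ Even v.val) :
    Aod n α (s1φ n α φ) v * Aod n α φ v = 1 := by
  set ψ := s1φ n α φ with hψdef
  set f : ℕ → K := fun k => Sod n α φ (v+2*(k:ℕ)) * Sev n α φ (v+2*(k:ℕ)+1) with hfd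
  have hf : ∀ k, f k ≠ 0 := fun k => mul_ne_zero (hSo _) (hSe _)
  rw [Aod_pr α φ hα hφ v]
  show (∏ k ∈ range (n+1), ψ (v+2*(k:ℕ)) * (α (v+2*(k:ℕ)+1) / ψ (v+2*(k:ℕ)+1))) * _ = 1
  rw [← prod_mul_distrib]
  have hfac : ∀ k ∈ range (n+1),
      (ψ (v+2*(k:ℕ)) * (α (v+2*(k:ℕ)+1) / ψ (v+2*(k:ℕ)+1)))
        * ((α (v+2*(k:ℕ)+1) / φ (v+2*(k:ℕ)+1)) * φ (v+2*((k+1:ℕ):ZMod (2*n+2))))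
      = f k / f (k+1) := by
    intro k _
    rw [hψdef, psi_odd_val' α φ hv k, psi_ratio_even' α φ hα hφ hSe hv k, hfd]
    exact AAstep' _ _ _ _ _ _ _ (hSo _) (hSe _) (hα _) (hφ _) (hφ _)
  rw [prod_congr rfl hfac, prod_div_telescope f hf (n+1)]
  have hwrap : f (n+1) = f 0 := by
    simp only [hfd]
    rw [wrap v]
    norm_num
  rw [hwrap, div_self (hf 0)]

end AA

end Stmt11Aux

open Stmt11Aux in
/-- `s₁` is an involution (the `α`-component of `s₁` is the identity,
so the content is that applying the `φ`-component twice returns `φ`). -/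
theorem stmt11 (n : ℕ) (hn : 1 ≤ n) (K : Type*) [Field K]
    (α φ : ZMod (2*n+2) → K) (hα : ∀ i, α i ≠ 0) (hφ : ∀ i, φ i ≠ 0)
    (hSe : ∀ x, Sev n α φ x ≠ 0) (hSo : ∀ x, Sod n α φ x ≠ 0)
    (hSe1 : ∀ x, Sev n α (s1φ n α φ) x ≠ 0)
    (hSo1 : ∀ x, Sod n α (s1φ n α φ) x ≠ 0) :
    ∀ x : ZMod (2*n+2), s1φ n α (s1φ n α φ) x = φ x := by
  intro x
  set ψ := s1φ n α φ with hψdef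
  have hψne : ∀ w, ψ w ≠ 0 := psi_ne α φ hα hφ hSe hSo
  by_cases hx : Even x.val
  · -- even case
    have hx1 : ¬ Even (x+1).val := by
      have h := parity_shift_odd_iff x 0
      rw [show x + 2*((0:ℕ):ZMod (2*n+2)) + 1 = x+1 by norm_num] at h
      exact fun hc => (h.mp hc) hx
    have hx2 : Even (x+2).val := by
      have h := parity_shift_iff x 1
      rw [show x + 2*((1:ℕ):ZMod (2*n+2)) = x+2 by norm_num] at h
      exact h.mpr hx
    set A := Aev n α φ x with hA
    set B := Aev n α ψ x with hB
    have e11 : x+1+1 = x+2 := by ring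
    have e12 : x+1+2 = x+3 := by ring
    have e21 : x+2+1 = x+3 := by ring
    have E1 : ψ x * Sev n α φ x = α x * φ (x+1) * Sev n α φ (x+2) := by
      rw [hψdef, s1φ_even α φ hx, div_mul_cancel₀ _ (hSe x)]
    have E2 : ψ (x+1) * Sod n α φ (x+3) * α (x+2) = φ (x+2) * Sod n α φ (x+1) := by
      have hv := s1φ_odd α φ hx1
      rw [e11, e12] at hv
      rw [hψdef, hv, div_mul_cancel₀ _ (hSo (x+3)), div_mul_eq_mul_div,
        div_mul_cancel₀ _ (hα (x+2))]
    have E3 : Sev n α φ x * φ x = (1-A)*φ x + α x * Sod n α φ (x+1) := by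
      rw [L2 α φ x, ← hA, add_mul]
      congr 1
      rw [div_mul_eq_mul_div, div_mul_cancel₀ _ (hφ x)]
    have E4 : Sod n α φ (x+1) = (1-A) + φ (x+1) * Sev n α φ (x+2) := by
      have h := L3 α φ (x+1)
      rw [e11, LA α φ hα hφ x, ← hA] at h
      exact h
    have E5 : B*A = 1 := AA_even α φ hα hφ hSe hSo hx
    have E6 : A*(1-A)*Sev n α ψ (x+2)*φ (x+2) = (1-A)*(α (x+2) * Sod n α φ (x+3)) := by
      have h := KE α φ hα hφ hSe hSo hx2
      rw [e21, LBev α φ hα hφ x, ← hA] at h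
      exact h
    have E7 : Sev n α ψ x * ψ x = (1-B)*ψ x + α x * Sod n α ψ (x+1) := by
      rw [L2 α ψ x, ← hB, add_mul]
      congr 1
      rw [div_mul_eq_mul_div, div_mul_cancel₀ _ (hψne x)]
    have E8 : Sod n α ψ (x+1) = (1-B) + ψ (x+1) * Sev n α ψ (x+2) := by
      have h := L3 α ψ (x+1)
      rw [e11, LA α ψ hα hψne x, ← hB] at h
      exact h
    have H : (α x * ψ (x+1) * Sev n α ψ (x+2) - φ x * Sev n α ψ x)
        * (ψ x * Sev n α φ x * φ x * A * α (x+2) * Sod n α φ (x+3)) = 0 := by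
      linear_combination
        (A*(α (x+2))*(Sod n α φ (x+3))*(φ x)*((α x)*(ψ (x+1))*(Sev n α ψ (x+2))-(1-B)*(φ x))) * E1
        + (-(α x)*(φ x)*((α x)+(φ x))*(1-A)*A*(Sev n α ψ (x+2))) * E2
        + (-A*(α (x+2))*(Sod n α φ (x+3))*(φ x)*(α x)*((ψ (x+1))*(Sev n α ψ (x+2))+(1-B))) * E3
        + (-A*(α (x+2))*(Sod n α φ (x+3))*(α x)*(φ x)*((α x)*(ψ (x+1))*(Sev n α ψ (x+2))-(φ x)*(1-B))) * E4
        + ((α x)*(φ x)*((α x)+(φ x))*(Sod n α φ (x+1))*(α (x+2))*(Sod n α φ (x+3))) * E5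
        + (-(α x)*(φ x)*((α x)+(φ x))*(Sod n α φ (x+1))) * E6
        + (-A*(α (x+2))*(Sod n α φ (x+3))*(φ x)*(φ x)*(Sev n α φ x)) * E7
        + (-A*(α (x+2))*(Sod n α φ (x+3))*(α x)*(φ x)*(φ x)*(Sev n α φ x)) * E8
    have Mne : ψ x * Sev n α φ x * φ x * A * α (x+2) * Sod n α φ (x+3) ≠ 0 := by
      refine mul_ne_zero (mul_ne_zero (mul_ne_zero (mul_ne_zero (mul_ne_zero
        (hψne x) (hSe x)) (hφ x)) ?_) (hα _)) (hSo _)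
      rw [hA]
      exact Aev_ne α φ hα hφ x
    have h0 : α x * ψ (x+1) * Sev n α ψ (x+2) - φ x * Sev n α ψ x = 0 :=
      (mul_eq_zero.mp H).resolve_right Mne
    rw [s1φ_even α ψ hx, div_eq_iff (hSe1 x)]
    linear_combination h0
  · -- odd case
    have hx1 : Even (x+1).val := by
      have h := parity_shift_odd_iff x 0
      rw [show x + 2*((0:ℕ):ZMod (2*n+2)) + 1 = x+1 by norm_num] at h
      exact h.mpr hx
    have hx2 : ¬ Even (x+2).val := by
      have h := parity_shift_iff x 1
      rw [show x + 2*((1:ℕ):ZMod (2*n+2)) = x+2 by norm_num] at h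
      exact fun hc => hx (h.mp hc)
    set A := Aod n α φ x with hA
    set B := Aod n α ψ x with hB
    have e11 : x+1+1 = x+2 := by ring
    have e12 : x+1+2 = x+3 := by ring
    have e21 : x+2+1 = x+3 := by ring
    have O1 : ψ x * Sod n α φ (x+2) * α (x+1) = φ (x+1) * Sod n α φ x := by
      rw [hψdef, s1φ_odd α φ hx, div_mul_cancel₀ _ (hSo (x+2)), div_mul_eq_mul_div,
        div_mul_cancel₀ _ (hα (x+1))]
    have O2 : ψ (x+1) * Sev n α φ (x+1) = α (x+1) * φ (x+2) * Sev n α φ (x+3) := by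
      have hv := s1φ_even α φ hx1
      rw [e11, e12] at hv
      rw [hψdef, hv, div_mul_cancel₀ _ (hSe (x+1))]
    have O3 : Sod n α φ x = (1-A) + φ x * Sev n α φ (x+1) := by
      rw [L3 α φ x, ← hA]
    have O4 : Sev n α φ (x+1) * φ (x+1) = (1-A)*φ (x+1) + α (x+1) * Sod n α φ (x+2) := by
      have h := L2 α φ (x+1)
      rw [e11] at h
      have hAe : Aev n α φ (x+1) = A := by
        rw [← LA α φ hα hφ (x+1), e11, LBod α φ hα hφ x, ← hA]
      rw [hAe] at h
      rw [h, add_mul]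
      congr 1
      rw [div_mul_eq_mul_div, div_mul_cancel₀ _ (hφ (x+1))]
    have O5 : B*A = 1 := AA_odd α φ hα hφ hSe hSo hx
    have O6 : A*(1-A)*Sod n α ψ (x+2) = (1-A)*(φ (x+2) * Sev n α φ (x+3)) := by
      have h := KO α φ hα hφ hSe hSo hx2
      rw [e21, LBod α φ hα hφ x, ← hA] at h
      exact h
    have O7 : Sod n α ψ x = (1-B) + ψ x * Sev n α ψ (x+1) := by
      rw [L3 α ψ x, ← hB]
    have O8 : Sev n α ψ (x+1) * ψ (x+1) = (1-B)*ψ (x+1) + α (x+1) * Sod n α ψ (x+2) := by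
      have h := L2 α ψ (x+1)
      rw [e11] at h
      have hBe : Aev n α ψ (x+1) = B := by
        rw [← LA α ψ hα hψne (x+1), e11, LBod α ψ hα hψne x, ← hB]
      rw [hBe] at h
      rw [h, add_mul]
      congr 1
      rw [div_mul_eq_mul_div, div_mul_cancel₀ _ (hψne (x+1))]
    have H : (ψ (x+1) * Sod n α ψ x - φ x * α (x+1) * Sod n α ψ (x+2))
        * (Sod n α φ (x+2) * α (x+1) * A) = 0 := by
      linear_combination
        ((1+(φ x))*(φ (x+1))*(A-1)) * O2
        + (-(1+(φ x))*(φ (x+1))*(ψ (x+1))*(Sev n α φ (x+1))) * O5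
        + ((1+(φ x))*(φ (x+1))*(α (x+1))) * O6
        + (A*((1-B)*(ψ (x+1))+(α (x+1))*(Sod n α ψ (x+2)))) * O1
        + (A*((1-B)*(ψ (x+1))+(α (x+1))*(Sod n α ψ (x+2)))*(φ (x+1))) * O3
        + (A*(-(1-B)*(ψ (x+1))+(φ x)*(α (x+1))*(Sod n α ψ (x+2)))) * O4
        + (A*(Sod n α φ (x+2))*(α (x+1))*(ψ (x+1))) * O7
        + (A*(Sod n α φ (x+2))*(α (x+1))*(ψ x)) * O8
    have Mne : Sod n α φ (x+2) * α (x+1) * A ≠ 0 := by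
      refine mul_ne_zero (mul_ne_zero (hSo _) (hα _)) ?_
      rw [hA]
      exact Aod_ne α φ hα hφ x
    have h0 : ψ (x+1) * Sod n α ψ x - φ x * α (x+1) * Sod n α ψ (x+2) = 0 :=
      (mul_eq_zero.mp H).resolve_right Mne
    rw [s1φ_odd α ψ hx, div_eq_iff (hSo1 (x+2)), div_mul_eq_mul_div, div_eq_iff (hα (x+1))]
    linear_combination h0
end

section
/- For every i ∈ ℤ/(2n+2)ℤ, the intertwining relations r_i ∘ π = π ∘ r_{i+1}, r_i ∘ π' = π' ∘ r_{i+1}, and r_i ∘ ρ = ρ ∘ r_{−i} hold as transformations of tuples (α, φ) (with all nonvanishing conditions holding for every intermediate tuple). -/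
/-- The Dynkin diagram automorphism `π`: `π(α)_i = α_{i+1}`, `π(φ)_i = φ_{i+1}`. -/
noncomputable def piT (n : ℕ) {K : Type*} [Field K]
    (T : (ZMod (2*n+2) → K) × (ZMod (2*n+2) → K)) :
    (ZMod (2*n+2) → K) × (ZMod (2*n+2) → K) :=
  (fun i => T.1 (i+1), fun i => T.2 (i+1))

/-- The Dynkin diagram automorphism `π'`: `π'(α)_i = α_{i+1}`, `π'(φ)_i = α_{i+1}/φ_{i+1}`. -/
noncomputable def piT' (n : ℕ) {K : Type*} [Field K]
    (T : (ZMod (2*n+2) → K) × (ZMod (2*n+2) → K)) :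
    (ZMod (2*n+2) → K) × (ZMod (2*n+2) → K) :=
  (fun i => T.1 (i+1), fun i => T.1 (i+1) / T.2 (i+1))

/-- The Dynkin diagram automorphism `ρ`: `ρ(α)_i = α_{-i}`, `ρ(φ)_{2i} = α_{-2i}/φ_{-2i}`,
`ρ(φ)_{2i+1} = φ_{-2i-1}`; since the modulus `2n+2` is even, the parity of an index
`x : ZMod (2n+2)` is detected by `x.val`. -/
noncomputable def rhoT (n : ℕ) {K : Type*} [Field K]
    (T : (ZMod (2*n+2) → K) × (ZMod (2*n+2) → K)) :
    (ZMod (2*n+2) → K) × (ZMod (2*n+2) → K) :=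
  (fun i => T.1 (-i), fun x => if Even x.val then T.1 (-x) / T.2 (-x) else T.2 (-x))

/-- The simple reflection `r_j` as a map of tuples `(α, φ)`. -/
noncomputable def rT (n : ℕ) {K : Type*} [Field K] (j : ZMod (2*n+2))
    (T : (ZMod (2*n+2) → K) × (ZMod (2*n+2) → K)) :
    (ZMod (2*n+2) → K) × (ZMod (2*n+2) → K) :=
  (rα n j T.1, rφ n j T.1 T.2)

/-- The nonvanishing conditions on a tuple `T = (α, φ)`. -/
def GoodT (n : ℕ) {K : Type*} [Field K]
    (T : (ZMod (2*n+2) → K) × (ZMod (2*n+2) → K)) : Prop :=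
  ∀ i, T.1 i ≠ 0 ∧ T.2 i ≠ 0 ∧ 1 + T.2 i ≠ 0 ∧ T.1 i + T.2 i ≠ 0

set_option maxHeartbeats 2000000 in
/-- the intertwining relations `r_i ∘ π = π ∘ r_{i+1}`,
`r_i ∘ π' = π' ∘ r_{i+1}` and `r_i ∘ ρ = ρ ∘ r_{-i}` (rightmost map applied first). -/
theorem stmt14 (n : ℕ) (hn : 1 ≤ n) (K : Type*) [Field K]
    (α φ : ZMod (2*n+2) → K) (h : GoodT n (α, φ)) :
    ∀ i : ZMod (2*n+2),
      GoodT n (piT n (α, φ)) → GoodT n (piT' n (α, φ)) → GoodT n (rhoT n (α, φ)) →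
      GoodT n (rT n (i+1) (α, φ)) → GoodT n (rT n (-i) (α, φ)) →
      rT n i (piT n (α, φ)) = piT n (rT n (i+1) (α, φ))
      ∧ rT n i (piT' n (α, φ)) = piT' n (rT n (i+1) (α, φ))
      ∧ rT n i (rhoT n (α, φ)) = rhoT n (rT n (-i) (α, φ)) := by
  intro i _ _ _ _ _
  haveI : NeZero (2*n+2) := ⟨by omega⟩
  haveI : Fact (1 < 2*n+2) := ⟨by omega⟩
  have hα : ∀ j, α j ≠ 0 := fun j => (h j).1
  have hφ : ∀ j, φ j ≠ 0 := fun j => (h j).2.1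
  have h1φ : ∀ j, 1 + φ j ≠ 0 := fun j => (h j).2.2.1
  have hαφ : ∀ j, α j + φ j ≠ 0 := fun j => (h j).2.2.2
  have NE : ∀ (x y c : ZMod (2*n+2)), c ≠ 0 → x = y + c → x ≠ y := by
    intro x y c hc he hh
    rw [hh] at he
    exact hc (left_eq_add.mp he)
  have F1 : (1 : ZMod (2*n+2)) ≠ 0 := by
    have h1 : ((1:ℕ) : ZMod (2*n+2)) ≠ 0 := by
      rw [Ne, ZMod.natCast_eq_zero_iff]
      intro hd
      have := Nat.le_of_dvd (by norm_num) hd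
      omega
    simpa using h1
  have F2 : (2 : ZMod (2*n+2)) ≠ 0 := by
    have h1 : ((2:ℕ) : ZMod (2*n+2)) ≠ 0 := by
      rw [Ne, ZMod.natCast_eq_zero_iff]
      intro hd
      have := Nat.le_of_dvd (by norm_num) hd
      omega
    simpa using h1
  have FN1 : (-1 : ZMod (2*n+2)) ≠ 0 := neg_ne_zero.mpr F1
  have FN2 : (-2 : ZMod (2*n+2)) ≠ 0 := neg_ne_zero.mpr F2
  have g1 : i ≠ i + 1 := NE _ _ (-1) FN1 (by ring)
  have g2 : i + 1 ≠ i := NE _ _ 1 F1 (by ring)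
  have g3 : i ≠ i - 1 := NE _ _ 1 F1 (by ring)
  have g4 : i - 1 ≠ i := NE _ _ (-1) FN1 (by ring)
  have g5 : i + 1 ≠ i - 1 := NE _ _ 2 F2 (by ring)
  have g6 : i - 1 ≠ i + 1 := NE _ _ (-2) FN2 (by ring)
  have g7 : i ≠ i + 1 + 1 := NE _ _ (-2) FN2 (by ring)
  have g8 : i + 1 + 1 ≠ i := NE _ _ 2 F2 (by ring)
  have m1 : (-i : ZMod (2*n+2)) ≠ -i + 1 := NE _ _ (-1) FN1 (by ring)
  have m2 : (-i : ZMod (2*n+2)) + 1 ≠ -i := NE _ _ 1 F1 (by ring)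
  have m3 : (-i : ZMod (2*n+2)) ≠ -i - 1 := NE _ _ 1 F1 (by ring)
  have m4 : (-i : ZMod (2*n+2)) - 1 ≠ -i := NE _ _ (-1) FN1 (by ring)
  have m5 : (-i : ZMod (2*n+2)) + 1 ≠ -i - 1 := NE _ _ 2 F2 (by ring)
  have m6 : (-i : ZMod (2*n+2)) - 1 ≠ -i + 1 := NE _ _ (-2) FN2 (by ring)
  have m7 : (-i : ZMod (2*n+2)) ≠ -i + 1 + 1 := NE _ _ (-2) FN2 (by ring)
  have m8 : (-i : ZMod (2*n+2)) + 1 + 1 ≠ -i := NE _ _ 2 F2 (by ring)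
  have nn1 : (-(i+1) : ZMod (2*n+2)) = -i - 1 := by ring
  have nn2 : (-(i-1) : ZMod (2*n+2)) = -i + 1 := by ring
  have hcs : ∀ k : ZMod (2*n+2), cartan n (i+1) (k+1) = cartan n i k := by
    intro k
    simp only [cartan, add_left_inj]
  have hcn : ∀ k : ZMod (2*n+2), cartan n (-i) (-k) = cartan n i k := by
    intro k
    have e : ((-i : ZMod (2*n+2)) = -k + 1 ∨ -k = -i + 1) ↔ (i = k + 1 ∨ k = i + 1) := by
      constructor
      · rintro (hh | hh)
        · right; linear_combination hh
        · left; linear_combination hh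
      · rintro (hh | hh)
        · right; linear_combination hh
        · left; linear_combination hh
    simp only [cartan, neg_inj, e]
  have hpar : ∀ x : ZMod (2*n+2), Even (x + 1).val ↔ ¬ Even x.val := by
    intro x
    have h1 : (x + 1).val % 2 = (x.val + (1:ZMod (2*n+2)).val) % 2 := by
      rw [ZMod.val_add, Nat.mod_mod_of_dvd _ ⟨n+1, by ring⟩]
    rw [ZMod.val_one] at h1
    rw [Nat.even_iff, Nat.even_iff, h1]
    omega
  have hparm : ∀ x : ZMod (2*n+2), Even (x - 1).val ↔ ¬ Even x.val := by
    intro x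
    have h1 := hpar (x - 1)
    rw [sub_add_cancel] at h1
    tauto
  have hC : (α (-i) + α (-i) / φ (-i)) / (1 + α (-i) / φ (-i))
      = α (-i) * (1 + φ (-i)) / (α (-i) + φ (-i)) := by
    rw [div_eq_div_iff (by field_simp [hφ (-i)]; rw [add_comm]; exact div_ne_zero (hαφ (-i)) (hφ (-i))) (hαφ (-i))]
    field_simp [hφ (-i)]
    ring
  have hC2 : (α (i+1) + α (i+1) / φ (i+1)) / (1 + α (i+1) / φ (i+1))
      = α (i+1) * (1 + φ (i+1)) / (α (i+1) + φ (i+1)) := by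
    rw [div_eq_div_iff (by field_simp [hφ (i+1)]; rw [add_comm]; exact div_ne_zero (hαφ (i+1)) (hφ (i+1))) (hαφ (i+1))]
    field_simp [hφ (i+1)]
    ring
  refine ⟨?_, ?_, ?_⟩
  · -- r_i ∘ π = π ∘ r_{i+1}
    refine Prod.ext ?_ ?_
    · funext k
      show rα n i (fun x => α (x+1)) k = rα n (i+1) α (k+1)
      simp only [rα, hcs]
    · funext k
      show rφ n i (fun x => α (x+1)) (fun x => φ (x+1)) k = rφ n (i+1) α φ (k+1)
      simp only [rφ, add_left_inj, add_sub_cancel_right, eq_sub_iff_add_eq]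
  · -- r_i ∘ π' = π' ∘ r_{i+1}
    refine Prod.ext ?_ ?_
    · funext k
      show rα n i (fun x => α (x+1)) k = rα n (i+1) α (k+1)
      simp only [rα, hcs]
    · funext k
      show rφ n i (fun x => α (x+1)) (fun x => α (x+1) / φ (x+1)) k
          = rα n (i+1) α (k+1) / rφ n (i+1) α φ (k+1)
      rcases eq_or_ne k i with rfl | hk1
      · simp only [rφ, rα, cartan, add_left_inj, add_sub_cancel_right, sub_add_cancel,
          g1, g2, g3, g4, g5, g6, g7, g8, eq_self_iff_true, if_true, if_false, ite_true,
          ite_false, or_self, or_false, false_or]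
        all_goals simp only [zero_sub, sub_zero, sub_self, neg_neg, neg_zero, zpow_neg, zpow_one, zpow_zero, zpow_two, mul_one, one_mul]
        field_simp [hα (k+1), hφ (k+1), hα (1+k), hφ (1+k)]
        try ring
      · rcases eq_or_ne k (i + 1) with rfl | hk2
        · simp only [rφ, rα, cartan, add_left_inj, add_sub_cancel_right, sub_add_cancel,
            g1, g2, g3, g4, g5, g6, g7, g8, eq_self_iff_true, if_true, if_false, ite_true,
            ite_false, or_self, or_false, false_or, true_or, or_true]
          rw [hC2]
          all_goals simp only [zero_sub, sub_zero, sub_self, neg_neg, neg_zero, zpow_neg, zpow_one, zpow_zero, zpow_two, mul_one, one_mul]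
          field_simp [hαφ (i+1), h1φ (i+1)]
        · rcases eq_or_ne k (i - 1) with rfl | hk3
          · simp only [rφ, rα, cartan, add_left_inj, add_sub_cancel_right, sub_add_cancel,
              g1, g2, g3, g4, g5, g6, g7, g8, eq_self_iff_true, if_true, if_false, ite_true,
              ite_false, or_self, or_false, false_or, true_or, or_true]
            rw [hC2]
            all_goals simp only [zero_sub, sub_zero, sub_self, neg_neg, neg_zero, zpow_neg, zpow_one, zpow_zero, zpow_two, mul_one, one_mul]
            field_simp [hαφ (i+1), h1φ (i+1)]
          · have d1 : ¬(i + 1 = k + 1) := fun hh => hk1 (by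
              first | linear_combination hh | linear_combination -hh)
            have d2 : ¬(i + 1 = k + 1 + 1) := fun hh => hk3 (by
              first | linear_combination hh | linear_combination -hh)
            have d3 : ¬(k + 1 = i + 1 + 1) := fun hh => hk2 (by
              first | linear_combination hh | linear_combination -hh)
            have d4 : ¬(k + 1 = i + 1) := fun hh => hk1 (by
              first | linear_combination hh | linear_combination -hh)
            have d5 : ¬(k + 1 = i + 1 - 1) := fun hh => hk3 (by
              first | linear_combination hh | linear_combination -hh)
            have d6 : ¬(k = i + 1) := hk2
            have d7 : ¬(k = i) := hk1
            have d8 : ¬(k = i - 1) := hk3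
            simp only [rφ, rα, cartan, d1, d2, d3, d4, d5, d6, d7, d8, if_false, ite_false,
              or_self, if_true, ite_true]
            all_goals simp only [zero_sub, sub_zero, sub_self, neg_neg, neg_zero, zpow_neg, zpow_one, zpow_zero, zpow_two, mul_one, one_mul]
  · -- r_i ∘ ρ = ρ ∘ r_{-i}
    refine Prod.ext ?_ ?_
    · funext k
      show rα n i (fun x => α (-x)) k = rα n (-i) α (-k)
      simp only [rα, hcn]
    · funext k
      show rφ n i (fun x => α (-x))
            (fun x => if Even x.val then α (-x) / φ (-x) else φ (-x)) k
          = if Even k.val then rα n (-i) α (-k) / rφ n (-i) α φ (-k)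
            else rφ n (-i) α φ (-k)
      rcases eq_or_ne k i with rfl | hk1
      · by_cases hp : Even k.val
        · simp only [rφ, rα, cartan, nn1, nn2, sub_add_cancel, add_left_inj, neg_inj,
            g1, g2, g3, g4, g5, g6, m1, m2, m3, m4, m5, m6, m7, m8, hp,
            eq_self_iff_true, if_true, if_false, ite_true, ite_false, or_self, or_false,
            false_or, true_or, or_true]
          all_goals simp only [zero_sub, sub_zero, sub_self, neg_neg, neg_zero, zpow_neg, zpow_one, zpow_zero, zpow_two, mul_one, one_mul]
          all_goals field_simp [hα (-k), hφ (-k)]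
          all_goals ring
        · simp only [rφ, rα, cartan, nn1, nn2, sub_add_cancel, add_left_inj, neg_inj,
            g1, g2, g3, g4, g5, g6, m1, m2, m3, m4, m5, m6, m7, m8, hp,
            eq_self_iff_true, if_true, if_false, ite_true, ite_false, or_self, or_false,
            false_or, true_or, or_true]
          all_goals simp only [zero_sub, sub_zero, sub_self, neg_neg, neg_zero, zpow_neg, zpow_one, zpow_zero, zpow_two, mul_one, one_mul]
          all_goals field_simp [hα (-k), hφ (-k)]
          all_goals ring
      · rcases eq_or_ne k (i + 1) with rfl | hk2
        · have hq : ¬ Even (i + 1).val ↔ Even i.val := by rw [hpar]; tauto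
          by_cases hp : Even i.val
          · have hq1 : ¬ Even (i + 1).val := hq.mpr hp
            simp only [rφ, rα, cartan, nn1, nn2, sub_add_cancel, add_left_inj, neg_inj,
              g1, g2, g3, g4, g5, g6, m1, m2, m3, m4, m5, m6, m7, m8, hp, hq1,
              eq_self_iff_true, if_true, if_false, ite_true, ite_false, or_self, or_false,
              false_or, true_or, or_true]
            rw [hC]
            have w1 : α (-i) + α (-i) * φ (-i) ≠ 0 := fun hh =>
              (mul_ne_zero (hα (-i)) (h1φ (-i))) (by linear_combination hh)
            all_goals simp only [zero_sub, sub_zero, sub_self, neg_neg, neg_zero, zpow_neg, zpow_one, zpow_zero, zpow_two, mul_one, one_mul]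
            all_goals field_simp [w1, hα (-i), hφ (-i), h1φ (-i), hαφ (-i), hα (-1-i), hφ (-1-i), hα (-i-1), hφ (-i-1)]
            all_goals ring
          · have hq1 : Even (i + 1).val := (hpar i).mpr hp
            simp only [rφ, rα, cartan, nn1, nn2, sub_add_cancel, add_left_inj, neg_inj,
              g1, g2, g3, g4, g5, g6, m1, m2, m3, m4, m5, m6, m7, m8, hp, hq1,
              eq_self_iff_true, if_true, if_false, ite_true, ite_false, or_self, or_false,
              false_or, true_or, or_true]
            all_goals simp only [zero_sub, sub_zero, sub_self, neg_neg, neg_zero, zpow_neg, zpow_one, zpow_zero, zpow_two, mul_one, one_mul]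
            all_goals field_simp [hα (-i), hφ (-i), h1φ (-i), hαφ (-i), hα (-1-i), hφ (-1-i), hα (-i-1), hφ (-i-1)]
            all_goals ring
        · rcases eq_or_ne k (i - 1) with rfl | hk3
          · by_cases hp : Even i.val
            · have hq1 : ¬ Even (i - 1).val := fun he => (hparm i).mp he hp
              simp only [rφ, rα, cartan, nn1, nn2, sub_add_cancel, add_left_inj, neg_inj,
                g1, g2, g3, g4, g5, g6, m1, m2, m3, m4, m5, m6, m7, m8, hp, hq1,
                eq_self_iff_true, if_true, if_false, ite_true, ite_false, or_self, or_false,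
                false_or, true_or, or_true]
              rw [hC]
              have w1 : α (-i) + α (-i) * φ (-i) ≠ 0 := fun hh =>
                (mul_ne_zero (hα (-i)) (h1φ (-i))) (by linear_combination hh)
              all_goals simp only [zero_sub, sub_zero, sub_self, neg_neg, neg_zero, zpow_neg, zpow_one, zpow_zero, zpow_two, mul_one, one_mul]
              all_goals field_simp [w1, hα (-i), hφ (-i), h1φ (-i), hαφ (-i), hα (1-i), hφ (1-i), hα (-i+1), hφ (-i+1)]
              all_goals ring
            · have hq1 : Even (i - 1).val := (hparm i).mpr hp
              simp only [rφ, rα, cartan, nn1, nn2, sub_add_cancel, add_left_inj, neg_inj,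
                g1, g2, g3, g4, g5, g6, m1, m2, m3, m4, m5, m6, m7, m8, hp, hq1,
                eq_self_iff_true, if_true, if_false, ite_true, ite_false, or_self, or_false,
                false_or, true_or, or_true]
              have w2 : φ (-i) * φ (1 - i) + φ (1 - i) ≠ 0 := fun hh =>
                (mul_ne_zero (hφ (1-i)) (h1φ (-i))) (by linear_combination hh)
              all_goals simp only [zero_sub, sub_zero, sub_self, neg_neg, neg_zero, zpow_neg, zpow_one, zpow_zero, zpow_two, mul_one, one_mul]
              all_goals field_simp [w2, hα (-i), hφ (-i), h1φ (-i), hαφ (-i), hα (1-i), hφ (1-i), hα (-i+1), hφ (-i+1)]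
              all_goals ring
          · have d0 : ¬(-k = -i) := fun hh => hk1 (neg_inj.mp hh)
            have d1 : ¬(-i = -k) := fun hh => hk1 (neg_inj.mp hh).symm
            have d2 : ¬(-i = -k + 1) := fun hh => hk2 (by
              first | linear_combination hh | linear_combination -hh)
            have d3 : ¬(-k = -i + 1) := fun hh => hk3 (by
              first | linear_combination hh | linear_combination -hh)
            have d4 : ¬(-k = -i - 1) := fun hh => hk2 (by
              first | linear_combination hh | linear_combination -hh)
            have d5 : ¬(k = i + 1) := hk2
            have d6 : ¬(k = i) := hk1
            have d7 : ¬(k = i - 1) := hk3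
            simp only [rφ, rα, cartan, d0, d1, d2, d3, d4, d5, d6, d7, if_false, ite_false,
              or_self]
            all_goals simp only [zero_sub, sub_zero, sub_self, neg_neg, neg_zero, zpow_neg, zpow_one, zpow_zero, zpow_two, mul_one, one_mul]
            all_goals by_cases hp : Even k.val
            all_goals simp [hp, hk1, d0]
end

section
/- With φ defined from (b, g, f, t) as in the context, one has Ŝ'_{2i} = (b_i − g_i) F_i / (t b_i f_i) for every i = 1, …, n, and Ŝ'_{2n+2} = (b_0 − g_0) F_{n+1} / (t b_0). -/
open Finset

/-- with `φ` defined from `(b, g, f, t)` as in the context,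
`Ŝ'_{2i} = (b_i - g_i) F_i / (t b_i f_i)` for `i = 1, …, n` and
`Ŝ'_{2n+2} = (b_0 - g_0) F_{n+1} / (t b_0)`. -/
theorem stmt16 (n : ℕ) (hn : 1 ≤ n) (K : Type*) [Field K]
    (t : K) (f b g φ : ℕ → K)
    (ht : t ≠ 0)
    (hf0 : f 0 = t)
    (hf : ∀ i, 1 ≤ i → i ≤ n → f i ≠ 0)
    (hb : ∀ i, i ≤ n → b i ≠ 0)
    (hg : ∀ i, i ≤ n → g i ≠ 0)
    (hbg : ∀ i, i ≤ n → b i ≠ g i)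
    (hφeven : ∀ i, i ≤ n → φ (2*i) = -(b i) / g i)
    (hφ1 : φ 1 = -(g 0) * (b 1 - g 1) * t / (b 1 * (b 0 - g 0) * f 1))
    (hφodd : ∀ i, 1 ≤ i → i ≤ n - 1 →
      φ (2*i+1) = -(g i) * (b (i+1) - g (i+1)) * f i / (b (i+1) * (b i - g i) * f (i+1)))
    (hφlast : φ (2*n+1) = -(g n) * (b 0 - g 0) * f n / (b 0 * (b n - g n)))
    (F : ℕ → K)
    (hF : ∀ i, F i = (∑ j ∈ Ico 1 i, f j) + t * (∑ j ∈ Icc i n, f j) + t)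
    (Sh : ℕ → K)
    (hSh : ∀ i, Sh i =
      (∑ j ∈ Icc i n, (∏ k ∈ Ico i j, 1 / (φ (2*k) * φ (2*k+1))) * (1 + 1 / φ (2*j)))
        + (∏ k ∈ Icc i n, 1 / (φ (2*k) * φ (2*k+1))) * (1 + 1 / φ 0)
        + ∑ j ∈ Ico 1 i, (∏ k ∈ Icc i n, 1 / (φ (2*k) * φ (2*k+1)))
            * (∏ k ∈ range j, 1 / (φ (2*k) * φ (2*k+1))) * (1 + 1 / φ (2*j)))
    (Shlast : K)
    (hShlast : Shlast = (1 + 1 / φ 0)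
        + ∑ j ∈ Icc 1 n, (∏ k ∈ range j, 1 / (φ (2*k) * φ (2*k+1))) * (1 + 1 / φ (2*j))) :
    (∀ i, 1 ≤ i → i ≤ n → Sh i = (b i - g i) * F i / (t * b i * f i))
    ∧ Shlast = (b 0 - g 0) * F (n+1) / (t * b 0) := by
  have hbg' : ∀ i, i ≤ n → b i - g i ≠ 0 := fun i hi => sub_ne_zero.mpr (hbg i hi)
  have hf' : ∀ i, i ≤ n → f i ≠ 0 := by
    intro i hi
    rcases Nat.eq_zero_or_pos i with h | h
    · rw [h, hf0]; exact ht
    · exact hf i h hi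
  obtain ⟨u, hu⟩ : ∃ u : ℕ → K, ∀ k, u k = b k * f k / (b k - g k) :=
    ⟨fun k => b k * f k / (b k - g k), fun k => rfl⟩
  have hune : ∀ k, k ≤ n → u k ≠ 0 := fun k hk => by
    rw [hu k]
    exact div_ne_zero (mul_ne_zero (hb k hk) (hf' k hk)) (hbg' k hk)
  have hA : ∀ k, k < n → 1 / (φ (2*k) * φ (2*k+1)) = u (k+1) / u k := by
    intro k hk
    have hkn : k ≤ n := le_of_lt hk
    have hk1 : k + 1 ≤ n := hk
    have e := hφeven k hkn
    have h1 := hb k hkn; have h2 := hg k hkn; have h3 := hbg' k hkn; have h4 := hf' k hkn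
    have h5 := hb (k+1) hk1; have h6 := hg (k+1) hk1
    have h9 : -b k ≠ 0 := neg_ne_zero.mpr h1
    have h7 := hbg' (k+1) hk1; have h8 := hf' (k+1) hk1
    rcases Nat.eq_zero_or_pos k with h | h
    · subst h
      norm_num at e ⊢
      rw [e, hφ1, hu 0, hu 1, hf0]
      field_simp
    · rw [e, hφodd k h (by omega), hu k, hu (k+1)]
      field_simp
  have hB : 1 / (φ (2*n) * φ (2*n+1)) = u 0 / (t * u n) := by
    rw [hφeven n le_rfl, hφlast, hu 0, hu n, hf0]
    have h1 := hb 0 (Nat.zero_le n); have h2 := hg 0 (Nat.zero_le n)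
    have h3 := hbg' 0 (Nat.zero_le n)
    have h4 := hb n le_rfl; have h5 := hg n le_rfl
    have h6 := hbg' n le_rfl; have h7 := hf' n le_rfl
    have h8 : -b n ≠ 0 := neg_ne_zero.mpr h4
    field_simp
  have hC : ∀ j, j ≤ n → 1 + 1 / φ (2*j) = f j / u j := by
    intro j hj
    rw [hφeven j hj, hu j]
    have h1 := hb j hj; have h2 := hg j hj; have h3 := hbg' j hj; have h4 := hf' j hj
    have h5 : -b j ≠ 0 := neg_ne_zero.mpr h1
    field_simp
    ring
  have hTel : ∀ i j, i ≤ j → j ≤ n →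
      ∏ k ∈ Ico i j, (1 / (φ (2*k) * φ (2*k+1))) = u j / u i := by
    intro i j hij
    induction j, hij using Nat.le_induction with
    | base => intro hin; rw [Finset.Ico_self, Finset.prod_empty, div_self (hune i hin)]
    | succ m hm ih =>
      intro hmn
      have hmn' : m ≤ n := by omega
      have hin : i ≤ n := by omega
      rw [Finset.prod_Ico_succ_top hm, ih hmn', hA m (by omega)]
      have h1 := hune m hmn'; have h2 := hune i hin
      field_simp
  have hφ0' : 1 + 1 / φ 0 = t / u 0 := by
    have h := hC 0 (Nat.zero_le n)
    norm_num at h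
    rw [hf0] at h
    simpa [one_div] using h
  constructor
  · intro i h1i hin
    rw [hSh i, hF i]
    have hmid : (∏ k ∈ Icc i n, 1 / (φ (2*k) * φ (2*k+1))) = u 0 / (t * u i) := by
      rw [← Finset.Ico_add_one_right_eq_Icc, Finset.prod_Ico_succ_top hin, hTel i n hin le_rfl, hB]
      have h1 := hune n le_rfl; have h2 := hune i hin
      field_simp
    have hsum1 : ∑ j ∈ Icc i n, (∏ k ∈ Ico i j, 1 / (φ (2*k) * φ (2*k+1))) * (1 + 1 / φ (2*j))
        = (∑ j ∈ Icc i n, f j) / u i := by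
      rw [Finset.sum_div]
      apply Finset.sum_congr rfl
      intro j hj
      rw [Finset.mem_Icc] at hj
      rw [hTel i j hj.1 hj.2, hC j hj.2]
      have h1 := hune j hj.2; have h2 := hune i hin
      field_simp
    have hsum3 : ∑ j ∈ Ico 1 i, (∏ k ∈ Icc i n, 1 / (φ (2*k) * φ (2*k+1)))
        * (∏ k ∈ range j, 1 / (φ (2*k) * φ (2*k+1))) * (1 + 1 / φ (2*j))
        = (∑ j ∈ Ico 1 i, f j) / (t * u i) := by
      rw [Finset.sum_div]
      apply Finset.sum_congr rfl
      intro j hj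
      rw [Finset.mem_Ico] at hj
      have hjn : j ≤ n := by omega
      rw [hmid, Finset.range_eq_Ico, hTel 0 j (Nat.zero_le j) hjn, hC j hjn]
      have h1 := hune j hjn; have h2 := hune i hin; have h3 := hune 0 (Nat.zero_le n)
      field_simp
    rw [hsum1, hsum3, hmid, hφ0']
    have h1 := hune i hin
    have h2 := hune 0 (Nat.zero_le n)
    have hmidval : u 0 / (t * u i) * (t / u 0) = 1 / u i := by
      field_simp
    rw [hmidval, hu i]
    have hb' := hb i hin; have hfi := hf' i hin; have hbgi := hbg' i hin
    field_simp
    ring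
  · rw [hShlast, hF (n+1), hφ0']
    have hsum : ∑ j ∈ Icc 1 n, (∏ k ∈ range j, 1 / (φ (2*k) * φ (2*k+1))) * (1 + 1 / φ (2*j))
        = (∑ j ∈ Icc 1 n, f j) / u 0 := by
      rw [Finset.sum_div]
      apply Finset.sum_congr rfl
      intro j hj
      rw [Finset.mem_Icc] at hj
      rw [Finset.range_eq_Ico, hTel 0 j (Nat.zero_le j) hj.2, hC j hj.2]
      have h1 := hune j hj.2; have h2 := hune 0 (Nat.zero_le n)
      field_simp
    rw [hsum]
    have hIcc : Icc (n+1) n = (∅ : Finset ℕ) := Finset.Icc_eq_empty (by omega)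
    rw [hIcc, Finset.sum_empty, mul_zero, add_zero, Finset.Ico_add_one_right_eq_Icc]
    have h2 := hune 0 (Nat.zero_le n)
    have hb0 := hb 0 (Nat.zero_le n); have hbg0 := hbg' 0 (Nat.zero_le n)
    rw [hu 0, hf0]
    field_simp
    ring
end

section
/- Under the hypotheses (i)–(v) of the context, for every z ∈ R one has A'(z) · B(z) = B(qz) · A(z), where A(z) = P_{n+1}^{-1}(z·I − D_{n+1}) P_n^{-1}(z·I − D_n) ⋯ P_1^{-1}(z·I − D_1), A'(z) is the same product formed with the primed matrices, and B(z) = Γ_1 + E_1 P_1^{-1}(z·I − D_1). -/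
open Fin.NatCast

lemma key17 {R : Type*} [CommRing R] (z w c : R) (hw : c * w = z)
    (D1 D2 D1' G1 G2 E1 E2 P1 P2 P1' : Matrix (Fin 2) (Fin 2) R)
    (hP1 : IsUnit P1) (hP2 : IsUnit P2) (hP1' : IsUnit P1')
    (h1 : D1' * G1 = G1 * D1)
    (h2 : D1' * E1 + P1' * G2 = G1 * P1 + c • (E1 * D2))
    (h4 : P1' * E2 = c • (E1 * P2)) :
    (P1')⁻¹ * (z • (1 : Matrix (Fin 2) (Fin 2) R) - D1')
      * (G1 + E1 * P1⁻¹ * (z • (1 : Matrix (Fin 2) (Fin 2) R) - D1))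
    = (G2 + E2 * P2⁻¹ * (w • (1 : Matrix (Fin 2) (Fin 2) R) - D2))
      * (P1⁻¹ * (z • (1 : Matrix (Fin 2) (Fin 2) R) - D1)) := by
  have i1 : P1 * P1⁻¹ = 1 := Matrix.mul_nonsing_inv _ ((Matrix.isUnit_iff_isUnit_det _).mp hP1)
  have i2 : P2 * P2⁻¹ = 1 := Matrix.mul_nonsing_inv _ ((Matrix.isUnit_iff_isUnit_det _).mp hP2)
  have i1' : P1' * P1'⁻¹ = 1 := Matrix.mul_nonsing_inv _ ((Matrix.isUnit_iff_isUnit_det _).mp hP1')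
  apply hP1'.mul_left_cancel
  have e1 : P1' * ((P1')⁻¹ * (z • (1 : Matrix (Fin 2) (Fin 2) R) - D1')
      * (G1 + E1 * P1⁻¹ * (z • (1 : Matrix (Fin 2) (Fin 2) R) - D1)))
      = (z • (1 : Matrix (Fin 2) (Fin 2) R) - D1')
        * (G1 + E1 * P1⁻¹ * (z • (1 : Matrix (Fin 2) (Fin 2) R) - D1)) := by
    rw [← mul_assoc, ← mul_assoc, i1', one_mul]
  rw [e1]
  have lhs : (z • (1 : Matrix (Fin 2) (Fin 2) R) - D1')
        * (G1 + E1 * P1⁻¹ * (z • (1 : Matrix (Fin 2) (Fin 2) R) - D1))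
      = (G1 * P1 + (z • E1 - D1' * E1)) * (P1⁻¹ * (z • (1 : Matrix (Fin 2) (Fin 2) R) - D1)) := by
    have hg : (z • (1 : Matrix (Fin 2) (Fin 2) R) - D1') * G1
        = (G1 * P1) * (P1⁻¹ * (z • (1 : Matrix (Fin 2) (Fin 2) R) - D1)) := by
      rw [mul_assoc, ← mul_assoc P1, i1, one_mul]
      simp only [sub_mul, mul_sub, smul_mul_assoc, mul_smul_comm, one_mul, mul_one, h1]
    rw [mul_add, hg, add_mul]
    congr 1
    rw [sub_mul, smul_mul_assoc, one_mul, ← mul_assoc, ← mul_assoc, sub_mul, smul_mul_assoc]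
    simp [mul_assoc]
  have rhs : P1' * ((G2 + E2 * P2⁻¹ * (w • (1 : Matrix (Fin 2) (Fin 2) R) - D2))
        * (P1⁻¹ * (z • (1 : Matrix (Fin 2) (Fin 2) R) - D1)))
      = (P1' * G2 + (z • E1 - c • (E1 * D2)))
        * (P1⁻¹ * (z • (1 : Matrix (Fin 2) (Fin 2) R) - D1)) := by
    rw [← mul_assoc, mul_add]
    congr 2
    rw [← mul_assoc, ← mul_assoc, h4, smul_mul_assoc, smul_mul_assoc, mul_assoc E1 P2, i2,
      mul_one, mul_sub, mul_smul_comm, mul_one, smul_sub, smul_smul, hw]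
  rw [lhs, rhs]
  congr 1
  have h2' : G1 * P1 - D1' * E1 = P1' * G2 - c • (E1 * D2) := by
    rw [sub_eq_sub_iff_add_eq_add, ← h2, add_comm]
  calc G1 * P1 + (z • E1 - D1' * E1) = (G1 * P1 - D1' * E1) + z • E1 := by abel
    _ = (P1' * G2 - c • (E1 * D2)) + z • E1 := by rw [h2']
    _ = P1' * G2 + (z • E1 - c • (E1 * D2)) := by abel

/-- under the compatibility hypotheses (i)–(v), the compatibility
`A'(z) B(z) = B(qz) A(z)` holds, where
`A(z) = P_{n+1}⁻¹(zI - D_{n+1}) ⋯ P_1⁻¹(zI - D_1)` (indices `1, …, n+1` are encoded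
as `Fin (n+1)` with `0` for `1` and `Fin.last n` for `n+1`), `A'(z)` is the analogous
product of the primed matrices, and `B(z) = Γ_1 + E_1 P_1⁻¹(zI - D_1)`.  The unit `q`
has inverse `qi`. -/
theorem stmt17 (n : ℕ) (hn : 1 ≤ n) (R : Type*) [CommRing R]
    (q qi : R) (hq : q * qi = 1)
    (D D' Γ E P P' : Fin (n+1) → Matrix (Fin 2) (Fin 2) R)
    (hP : ∀ i, IsUnit (P i)) (hP' : ∀ i, IsUnit (P' i))
    (h1 : ∀ i, D' i * Γ i = Γ i * D i)
    (h2 : ∀ i : Fin (n+1), (i : ℕ) < n →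
      D' i * E i + P' i * Γ (i+1) = Γ i * P i + E i * D (i+1))
    (h3 : D' (Fin.last n) * E (Fin.last n) + P' (Fin.last n) * Γ 0
      = Γ (Fin.last n) * P (Fin.last n) + qi • (E (Fin.last n) * D 0))
    (h4 : ∀ i : Fin (n+1), (i : ℕ) < n → P' i * E (i+1) = E i * P (i+1))
    (h5 : P' (Fin.last n) * E 0 = qi • (E (Fin.last n) * P 0)) :
    ∀ z : R,
      (((List.finRange (n+1)).reverse.map
          (fun i => (P' i)⁻¹ * (z • (1 : Matrix (Fin 2) (Fin 2) R) - D' i))).prod)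
        * (Γ 0 + E 0 * (P 0)⁻¹ * (z • (1 : Matrix (Fin 2) (Fin 2) R) - D 0))
      = (Γ 0 + E 0 * (P 0)⁻¹ * ((q * z) • (1 : Matrix (Fin 2) (Fin 2) R) - D 0))
        * (((List.finRange (n+1)).reverse.map
            (fun i => (P i)⁻¹ * (z • (1 : Matrix (Fin 2) (Fin 2) R) - D i))).prod) := by

  intro z
  have hconv : ∀ (g : Fin (n+1) → Matrix (Fin 2) (Fin 2) R),
      ((List.finRange (n+1)).reverse.map g).prod
        = ((List.range (n+1)).reverse.map (fun j : ℕ => g (j : Fin (n+1)))).prod := by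
    intro g
    have hfun : g = (fun j : ℕ => g (j : Fin (n+1))) ∘ Fin.val := by
      funext i; simp
    conv_lhs => rw [hfun]
    rw [← List.map_map, List.map_reverse,
      (List.ext_getElem (by simp) (by simp) : (List.finRange (n+1)).map Fin.val = List.range (n+1))]
  rw [hconv, hconv]
  set B : Matrix (Fin 2) (Fin 2) R :=
    Γ 0 + E 0 * (P 0)⁻¹ * (z • (1 : Matrix (Fin 2) (Fin 2) R) - D 0) with hB
  have hlast : ((n : ℕ) : Fin (n+1)) = Fin.last n := by
    ext; simp [Fin.val_cast_of_lt (Nat.lt_succ_self n)]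
  have main : ∀ k, k ≤ n →
      ((List.range k).reverse.map
          (fun j : ℕ => (P' (j : Fin (n+1)))⁻¹
            * (z • (1 : Matrix (Fin 2) (Fin 2) R) - D' (j : Fin (n+1))))).prod * B
      = (Γ (k : Fin (n+1)) + E (k : Fin (n+1)) * (P (k : Fin (n+1)))⁻¹
            * (z • (1 : Matrix (Fin 2) (Fin 2) R) - D (k : Fin (n+1))))
        * ((List.range k).reverse.map
            (fun j : ℕ => (P (j : Fin (n+1)))⁻¹
              * (z • (1 : Matrix (Fin 2) (Fin 2) R) - D (j : Fin (n+1))))).prod := by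
    intro k
    induction k with
    | zero => intro _; simp [hB]
    | succ k ih =>
      intro hk
      have hkn : k < n := hk
      have hkval : ((k : Fin (n+1)) : ℕ) = k := Fin.val_cast_of_lt (Nat.lt_succ_of_lt hkn)
      have hcast : ((k + 1 : ℕ) : Fin (n+1)) = (k : Fin (n+1)) + 1 := by push_cast; ring
      rw [List.range_succ, List.reverse_append, List.reverse_singleton, List.singleton_append,
        List.map_cons, List.prod_cons, List.map_cons, List.prod_cons, mul_assoc,
        ih (Nat.le_of_lt hkn), ← mul_assoc, ← mul_assoc, hcast]
      congr 1
      have h2' : D' (k : Fin (n+1)) * E (k : Fin (n+1)) + P' (k : Fin (n+1)) * Γ ((k : Fin (n+1)) + 1)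
          = Γ (k : Fin (n+1)) * P (k : Fin (n+1))
            + (1 : R) • (E (k : Fin (n+1)) * D ((k : Fin (n+1)) + 1)) := by
        rw [one_smul]; exact h2 _ (by rw [hkval]; exact hkn)
      have h4' : P' (k : Fin (n+1)) * E ((k : Fin (n+1)) + 1)
          = (1 : R) • (E (k : Fin (n+1)) * P ((k : Fin (n+1)) + 1)) := by
        rw [one_smul]; exact h4 _ (by rw [hkval]; exact hkn)
      exact key17 z z 1 (one_mul z) _ _ _ _ _ _ _ _ _ _ (hP _) (hP _) (hP' _)
        (h1 _) h2' h4'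
  have step : ((List.range (n+1)).reverse.map
        (fun j : ℕ => (P' (j : Fin (n+1)))⁻¹
          * (z • (1 : Matrix (Fin 2) (Fin 2) R) - D' (j : Fin (n+1))))).prod * B
      = (Γ 0 + E 0 * (P 0)⁻¹ * ((q * z) • (1 : Matrix (Fin 2) (Fin 2) R) - D 0))
        * ((List.range (n+1)).reverse.map
            (fun j : ℕ => (P (j : Fin (n+1)))⁻¹
              * (z • (1 : Matrix (Fin 2) (Fin 2) R) - D (j : Fin (n+1))))).prod := by
    rw [List.range_succ, List.reverse_append, List.reverse_singleton, List.singleton_append,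
      List.map_cons, List.prod_cons, List.map_cons, List.prod_cons, mul_assoc, main n le_rfl,
      ← mul_assoc, ← mul_assoc, hlast]
    congr 1
    have hw : qi * (q * z) = z := by rw [← mul_assoc, mul_comm qi q, hq, one_mul]
    exact key17 z (q * z) qi hw _ _ _ _ _ _ _ _ _ _ (hP _) (hP _) (hP' _)
      (h1 _) h3 h5
  exact step
end

section
/- For every z ∈ K, the determinant of the (2n+2)×(2n+2) block matrix M(z) equals t · det(z·I − A(0)), where I is the 2×2 identity matrix and A(0) = M̂_{n+1,1}^{-1}(−M̂_{n+1,n+1}) M̂_{n,n+1}^{-1}(−M̂_{n,n}) ⋯ M̂_{1,2}^{-1}(−M̂_{1,1}) is the value of A at z = 0. -/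
/-- The diagonal block `M̂_{i,i} = (1/a_1) [[a_i, c_i],[0, b_i]]`
(`i = 1, …, n+1`, encoded as `Fin (n+1)` with `0` standing for `1`). -/
noncomputable def Dmat (n : ℕ) {K : Type*} [Field K] (a b c : Fin (n+1) → K)
    (i : Fin (n+1)) : Matrix (Fin 2) (Fin 2) K :=
  (1 / a 0) • !![a i, c i; 0, b i]

/-- The block `M̂_{i,i+1} = (1/a_1) [[-1, 0],[d_i, -1]]` for `i = 1, …, n`, and, for the
last index, the corner block `M̂_{n+1,1} = (1/a_1) [[-t, 0],[h, -1]]`. -/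
noncomputable def Pmat (n : ℕ) {K : Type*} [Field K] (a : Fin (n+1) → K)
    (d : Fin n → K) (t hh : K) (i : Fin (n+1)) : Matrix (Fin 2) (Fin 2) K :=
  if h : (i : ℕ) < n then (1 / a 0) • !![-1, 0; d ⟨i, h⟩, -1]
  else (1 / a 0) • !![-t, 0; hh, -1]

/-- The matrix `A(z) = M̂_{n+1,1}⁻¹(zI - M̂_{n+1,n+1}) ⋯ M̂_{1,2}⁻¹(zI - M̂_{1,1})`. -/
noncomputable def Amat (n : ℕ) {K : Type*} [Field K] (a b c : Fin (n+1) → K)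
    (d : Fin n → K) (t hh : K) (z : K) : Matrix (Fin 2) (Fin 2) K :=
  (((List.finRange (n+1)).reverse.map
      (fun i => (Pmat n a d t hh i)⁻¹
        * (z • (1 : Matrix (Fin 2) (Fin 2) K) - Dmat n a b c i))).prod)

/-- The `(2n+2) × (2n+2)` block matrix `M(z)`: diagonal blocks
`M_{i,i} = [[a_i, c_i],[0, b_i]]`, superdiagonal blocks `M_{i,i+1} = [[-1,0],[d_i,-1]]`,
bottom-left corner block `z·M_{n+1,1} = z·[[-t,0],[h,-1]]`, all other blocks zero. -/
noncomputable def Mblock (n : ℕ) {K : Type*} [Field K] (a b c : Fin (n+1) → K)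
    (d : Fin n → K) (t hh : K) (z : K) :
    Matrix (Fin (n+1) × Fin 2) (Fin (n+1) × Fin 2) K :=
  Matrix.of fun p q =>
    if p.1 = q.1 then !![a p.1, c p.1; 0, b p.1] p.2 q.2
    else if h : (q.1 : ℕ) = (p.1 : ℕ) + 1 then
      !![-1, 0; d ⟨p.1, by have := q.1.isLt; omega⟩, -1] p.2 q.2
    else if p.1 = Fin.last n ∧ q.1 = 0 then z * (!![-t, 0; hh, -1] p.2 q.2)
    else 0

namespace Stmt19Aux
open Matrix
open Fin.NatCast

variable {K : Type*} [Field K]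

/-- Block matrix from a function of 2×2 blocks. -/
def blk {m : ℕ} (B : Fin m → Fin m → Matrix (Fin 2) (Fin 2) K) :
    Matrix (Fin m × Fin 2) (Fin m × Fin 2) K :=
  Matrix.of fun p q => B p.1 q.1 p.2 q.2

lemma blk_mul {m : ℕ} (B B' : Fin m → Fin m → Matrix (Fin 2) (Fin 2) K) :
    blk B * blk B' = blk (fun i j => ∑ k, B i k * B' k j) := by
  ext p q
  simp only [blk, Matrix.mul_apply, Matrix.of_apply, Matrix.sum_apply,
    Fintype.sum_prod_type]

lemma det_blk_upper {m : ℕ} (B : Fin m → Fin m → Matrix (Fin 2) (Fin 2) K)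
    (h : ∀ i j, j < i → B i j = 0) :
    (blk B).det = ∏ i, (B i i).det := by
  have hbt : (blk B).BlockTriangular (fun p => p.1) := by
    intro p q hlt
    show B p.1 q.1 p.2 q.2 = 0
    rw [h _ _ hlt]; rfl
  rw [hbt.det]
  have himg : (Finset.univ.image (fun p : Fin m × Fin 2 => p.1)) = Finset.univ := by
    apply Finset.eq_univ_iff_forall.2
    intro i
    exact Finset.mem_image.2 ⟨(i, 0), Finset.mem_univ _, rfl⟩
  rw [himg]
  apply Finset.prod_congr rfl
  intro i _
  let e : Fin 2 ≃ {p : Fin m × Fin 2 // p.1 = i} :=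
    { toFun := fun x => ⟨(i, x), rfl⟩
      invFun := fun p => p.1.2
      left_inv := fun x => rfl
      right_inv := fun p => by
        rcases p with ⟨⟨j, x⟩, hp⟩
        simp only at hp
        subst hp
        rfl }
  have hsub : (((blk B).toSquareBlock (fun p => p.1) i).submatrix e e) = B i i := by
    ext x y; rfl
  rw [← hsub, Matrix.det_submatrix_equiv_self]

lemma det_blk_lower {m : ℕ} (B : Fin m → Fin m → Matrix (Fin 2) (Fin 2) K)
    (h : ∀ i j, i < j → B i j = 0) :
    (blk B).det = ∏ i, (B i i).det := by
  rw [← Matrix.det_transpose]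
  have htr : (blk B)ᵀ = blk (fun i j => (B j i)ᵀ) := by
    ext p q; rfl
  rw [htr, det_blk_upper (fun i j => (B j i)ᵀ)
    (fun i j hij => by show (B j i)ᵀ = 0; rw [h _ _ hij]; rfl)]
  simp [Matrix.det_transpose]

section Main

variable {n : ℕ} (a b c : Fin (n+1) → K) (d : Fin n → K) (t hh : K)

/-- unhatted diagonal block -/
def Dm (i : Fin (n+1)) : Matrix (Fin 2) (Fin 2) K := !![a i, c i; 0, b i]

/-- unhatted off-diagonal block (with the corner block at the last index) -/
def Pm (i : Fin (n+1)) : Matrix (Fin 2) (Fin 2) K :=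
  if h : (i : ℕ) < n then !![-1, 0; d ⟨i, h⟩, -1] else !![-t, 0; hh, -1]

lemma det_Pm (i : Fin (n+1)) :
    (Pm d t hh i).det = if (i : ℕ) < n then 1 else t := by
  unfold Pm
  split <;> simp [Matrix.det_fin_two_of]

lemma isUnit_det_Pm (ht : t ≠ 0) (i : Fin (n+1)) : IsUnit (Pm d t hh i).det := by
  rw [det_Pm]
  split <;> simp [ht]

/-- the partial products `C_k` -/
noncomputable def Cc : ℕ → Matrix (Fin 2) (Fin 2) K
  | 0 => 1
  | k+1 => ((Pm d t hh (k : Fin (n+1)))⁻¹ * (-(Dm a b c (k : Fin (n+1)))))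
      * Cc k

lemma Pm_mul_Cc_succ (ht : t ≠ 0) (i : Fin (n+1)) :
    Pm d t hh i * Cc a b c d t hh ((i : ℕ) + 1)
      = -(Dm a b c i * Cc a b c d t hh (i : ℕ)) := by
  have hcast : (((i : ℕ) : Fin (n+1))) = i := Fin.cast_val_eq_self i
  show Pm d t hh i * (((Pm d t hh ((i : ℕ) : Fin (n+1)))⁻¹
      * (-(Dm a b c ((i : ℕ) : Fin (n+1))))) * Cc a b c d t hh (i : ℕ)) = _
  rw [hcast, ← Matrix.mul_assoc, ← Matrix.mul_assoc,
    Matrix.mul_nonsing_inv _ (isUnit_det_Pm d t hh ht i), Matrix.one_mul,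
    Matrix.neg_mul]

lemma Pmat_eq (a : Fin (n+1) → K) (i : Fin (n+1)) :
    Pmat n a d t hh i = (1 / a 0) • Pm d t hh i := by
  unfold Pmat Pm
  by_cases h : (i : ℕ) < n <;> simp [h]

lemma Amat_zero (a : Fin (n+1) → K) (ha : a 0 ≠ 0) (ht : t ≠ 0) :
    Amat n a b c d t hh 0 = ((List.finRange (n+1)).reverse.map
      (fun i => (Pm d t hh i)⁻¹ * (-(Dm a b c i)))).prod := by
  unfold Amat
  congr 1
  apply List.map_congr_left
  intro i _
  have hinv : (Pmat n a d t hh i)⁻¹ = a 0 • (Pm d t hh i)⁻¹ := by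
    rw [Pmat_eq]
    apply Matrix.inv_eq_right_inv
    rw [Matrix.smul_mul, Matrix.mul_smul, smul_smul,
      Matrix.mul_nonsing_inv _ (isUnit_det_Pm d t hh ht i),
      one_div, inv_mul_cancel₀ ha, one_smul]
  have hD : (0 : K) • (1 : Matrix (Fin 2) (Fin 2) K) - Dmat n a b c i
      = (1 / a 0) • (-(Dm a b c i)) := by
    rw [zero_smul, zero_sub, smul_neg]
    rfl
  rw [hinv, hD, Matrix.smul_mul, Matrix.mul_smul, smul_smul,
    mul_one_div_cancel ha, one_smul]

lemma Cc_eq_Amat (a : Fin (n+1) → K) (ha : a 0 ≠ 0) (ht : t ≠ 0) :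
    Cc a b c d t hh (n+1) = Amat n a b c d t hh 0 := by
  rw [Amat_zero b c d t hh a ha ht]
  set g : Fin (n+1) → Matrix (Fin 2) (Fin 2) K :=
    fun i => (Pm d t hh i)⁻¹ * (-(Dm a b c i)) with hg
  have key : ∀ m, m ≤ n + 1 →
      (((List.finRange (n+1)).take m).reverse.map g).prod = Cc a b c d t hh m := by
    intro m
    induction m with
    | zero => intro _; simp [Cc]
    | succ m ih =>
      intro hm
      have hmlt : m < (List.finRange (n+1)).length := by
        simp only [List.length_finRange]; omega
      rw [List.take_succ, List.getElem?_eq_getElem hmlt]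
      have hx : (List.finRange (n+1))[m] = ((m : ℕ) : Fin (n+1)) := by
        rw [List.getElem_finRange]
        ext
        simp [Fin.val_cast_of_lt (show m < n + 1 by omega)]
      rw [hx]
      simp only [Option.toList_some, List.reverse_append, List.reverse_singleton,
        List.singleton_append, List.map_cons, List.prod_cons]
      rw [ih (by omega)]
      rfl
  have h2 := key (n+1) le_rfl
  rw [List.take_of_length_le (by simp)] at h2
  exact h2.symm

variable (z : K)

def MBf (i j : Fin (n+1)) : Matrix (Fin 2) (Fin 2) K :=
  if i = j then Dm a b c i
  else if (j : ℕ) = (i : ℕ) + 1 then Pm d t hh i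
  else if i = Fin.last n ∧ j = 0 then z • Pm d t hh (Fin.last n)
  else 0

noncomputable def Vf (i j : Fin (n+1)) : Matrix (Fin 2) (Fin 2) K :=
  if j = 0 then Cc a b c d t hh (i : ℕ) else if i = j then 1 else 0

noncomputable def Ff (i j : Fin (n+1)) : Matrix (Fin 2) (Fin 2) K :=
  if i = j then
    (if (i : ℕ) < n then Pm d t hh i
     else Pm d t hh i * (z • (1 : Matrix (Fin 2) (Fin 2) K) - Cc a b c d t hh (n+1)))
  else if (i : ℕ) = (j : ℕ) + 1 then Dm a b c i else 0

def Sf (i j : Fin (n+1)) : Matrix (Fin 2) (Fin 2) K :=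
  if j = i + 1 then 1 else 0

noncomputable def Ef (i j : Fin (n+1)) : Matrix (Fin 2) (Fin 2) K :=
  if j = 0 then
    (if i = Fin.last n then
      Pm d t hh i * (z • (1 : Matrix (Fin 2) (Fin 2) K) - Cc a b c d t hh (n+1))
     else 0)
  else MBf a b c d t hh z i j

lemma sumL (hn : 1 ≤ n) (ht : t ≠ 0) (i j : Fin (n+1)) :
    ∑ k, MBf a b c d t hh z i k * Vf a b c d t hh k j = Ef a b c d t hh z i j := by
  by_cases hj : j = 0
  · subst hj
    by_cases hi : i = Fin.last n
    · subst hi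
      have h0last : (0 : Fin (n+1)) ≠ Fin.last n := by
        intro h
        have := congrArg Fin.val h
        simp [Fin.val_last] at this
        omega
      rw [← Finset.add_sum_erase _ _ (Finset.mem_univ (0 : Fin (n+1))),
        ← Finset.add_sum_erase _ _
          (Finset.mem_erase.2 ⟨(by simpa using h0last.symm), Finset.mem_univ (Fin.last n)⟩)]
      have hrest : ∑ k ∈ (Finset.univ.erase (0 : Fin (n+1))).erase (Fin.last n),
          MBf a b c d t hh z (Fin.last n) k * Vf a b c d t hh k 0 = 0 := by
        apply Finset.sum_eq_zero
        intro k hk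
        rw [Finset.mem_erase, Finset.mem_erase] at hk
        have hk1 : k ≠ Fin.last n := hk.1
        have hk0 : k ≠ 0 := hk.2.1
        have : MBf a b c d t hh z (Fin.last n) k = 0 := by
          unfold MBf
          rw [if_neg (fun h => hk1 h.symm), if_neg, if_neg (fun h => hk0 h.2)]
          have := k.isLt
          simp [Fin.val_last]
          omega
        rw [this, Matrix.zero_mul]
      rw [hrest, add_zero]
      have hterm0 : MBf a b c d t hh z (Fin.last n) 0 * Vf a b c d t hh 0 0
          = z • Pm d t hh (Fin.last n) := by
        unfold MBf Vf
        rw [if_neg (fun h => h0last h.symm), if_neg, if_pos ⟨rfl, rfl⟩, if_pos rfl]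
        · show _ * Cc a b c d t hh ((0 : Fin (n+1)) : ℕ) = _
          norm_num [Cc]
        · simp [Fin.val_last]
      have htermlast : MBf a b c d t hh z (Fin.last n) (Fin.last n)
            * Vf a b c d t hh (Fin.last n) 0
          = Dm a b c (Fin.last n) * Cc a b c d t hh n := by
        unfold MBf Vf
        rw [if_pos rfl, if_pos rfl, Fin.val_last]
      rw [hterm0, htermlast]
      unfold Ef
      rw [if_pos rfl, if_pos rfl]
      have hlastval : ((Fin.last n : Fin (n+1)) : ℕ) = n := Fin.val_last n
      have hkey := Pm_mul_Cc_succ a b c d t hh ht (Fin.last n)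
      rw [hlastval] at hkey
      rw [Matrix.mul_sub, mul_smul_comm, Matrix.mul_one, hkey, sub_neg_eq_add]
    · -- i ≠ last
      have hilt : (i : ℕ) < n := by
        have := i.isLt
        have : (i : ℕ) ≠ n := fun h => hi (Fin.ext (by simp [Fin.val_last, h]))
        omega
      set i' : Fin (n+1) := ⟨(i : ℕ) + 1, by omega⟩ with hi'
      have hii' : i ≠ i' := by
        intro h
        have := congrArg Fin.val h
        simp [hi'] at this
      rw [← Finset.add_sum_erase _ _ (Finset.mem_univ i),
        ← Finset.add_sum_erase _ _
          (Finset.mem_erase.2 ⟨fun h => hii' h.symm, Finset.mem_univ i'⟩)]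
      have hrest : ∑ k ∈ (Finset.univ.erase i).erase i',
          MBf a b c d t hh z i k * Vf a b c d t hh k 0 = 0 := by
        apply Finset.sum_eq_zero
        intro k hk
        rw [Finset.mem_erase, Finset.mem_erase] at hk
        have : MBf a b c d t hh z i k = 0 := by
          unfold MBf
          rw [if_neg, if_neg, if_neg, ]
          · intro hcorner
            exact hi hcorner.1
          · intro hv
            exact hk.1 (Fin.ext (by simp [hi', hv]))
          · intro h
            exact hk.2.1 h.symm
        rw [this, Matrix.zero_mul]
      rw [hrest, add_zero]
      have htermi : MBf a b c d t hh z i i * Vf a b c d t hh i 0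
          = Dm a b c i * Cc a b c d t hh (i : ℕ) := by
        unfold MBf Vf
        rw [if_pos rfl, if_pos rfl]
      have htermi' : MBf a b c d t hh z i i' * Vf a b c d t hh i' 0
          = Pm d t hh i * Cc a b c d t hh ((i : ℕ) + 1) := by
        unfold MBf Vf
        rw [if_neg hii', if_pos (by simp [hi']), if_pos rfl]
      rw [htermi, htermi', Pm_mul_Cc_succ a b c d t hh ht i]
      unfold Ef
      rw [if_pos rfl, if_neg hi]
      exact add_neg_cancel _
  · -- j ≠ 0
    rw [Finset.sum_eq_single j]
    · unfold Vf
      rw [if_neg hj, if_pos rfl, Matrix.mul_one]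
      unfold Ef
      rw [if_neg hj]
    · intro k _ hkj
      unfold Vf
      rw [if_neg hj, if_neg hkj, Matrix.mul_zero]
    · intro h
      exact absurd (Finset.mem_univ j) h

lemma sumR (hn : 1 ≤ n) (i j : Fin (n+1)) :
    ∑ k, Ff a b c d t hh z i k * Sf k j = Ef a b c d t hh z i j := by
  rw [Finset.sum_eq_single (j - 1)]
  · have hS : Sf (j - 1) j = (1 : Matrix (Fin 2) (Fin 2) K) := by
      unfold Sf
      rw [if_pos (by rw [sub_add_cancel])]
    rw [hS, Matrix.mul_one]
    by_cases hj : j = 0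
    · subst hj
      have hsub : (0 : Fin (n+1)) - 1 = Fin.last n := by
        have := Fin.last_add_one n
        rw [← this]
        abel
      rw [hsub]
      unfold Ff Ef
      by_cases hi : i = Fin.last n
      · subst hi
        rw [if_pos rfl, if_neg (by simp [Fin.val_last]), if_pos rfl, if_pos rfl]
      · rw [if_neg hi, if_pos rfl, if_neg hi, if_neg]
        have := i.isLt
        simp [Fin.val_last]
        omega
    · have hjval : 1 ≤ (j : ℕ) := by
        have : (j : ℕ) ≠ 0 := fun h => hj (Fin.ext (by simp [h]))
        omega
      have h1 : ((1 : Fin (n+1)) : ℕ) = 1 := by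
        rw [Fin.val_one', Nat.mod_eq_of_lt (by omega)]
      have hval : ((j - 1 : Fin (n+1)) : ℕ) = (j : ℕ) - 1 := by
        rw [Fin.sub_def]
        simp only [h1]
        have heq : (n + 1 - 1) + (j : ℕ) = (n + 1) + ((j : ℕ) - 1) := by omega
        show ((n + 1 - 1) + (j : ℕ)) % (n + 1) = (j : ℕ) - 1
        rw [heq, Nat.add_mod_left, Nat.mod_eq_of_lt (by have := j.isLt; omega)]
      unfold Ff Ef MBf
      rw [if_neg hj]
      by_cases hik : i = j - 1
      · have hiv : (i : ℕ) = (j : ℕ) - 1 := by rw [hik, hval]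
        have hilt : (i : ℕ) < n := by have := j.isLt; omega
        have hij : i ≠ j := by
          intro h
          rw [h] at hiv
          omega
        rw [if_pos hik, if_pos hilt, if_neg hij, if_pos (by omega)]
      · by_cases hij : i = j
        · subst hij
          rw [if_neg hik, if_pos (by rw [hval]; omega), if_pos rfl]
        · rw [if_neg hik, if_neg, if_neg hij, if_neg, if_neg]
          · exact fun h => hj h.2
          · intro h
            apply hik
            apply Fin.ext
            rw [hval]
            omega
          · intro h
            apply hij
            apply Fin.ext
            rw [hval] at h
            have := j.isLt
            omega
  · intro k _ hk
    have hS : Sf k j = (0 : Matrix (Fin 2) (Fin 2) K) := by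
      unfold Sf
      rw [if_neg]
      intro h
      exact hk (by rw [h]; abel)
    rw [hS, Matrix.mul_zero]
  · intro h
    exact absurd (Finset.mem_univ _) h

lemma Mblock_eq_blk : Mblock n a b c d t hh z = blk (MBf a b c d t hh z) := by
  ext ⟨p1, p2⟩ ⟨q1, q2⟩
  simp only [Mblock, blk, Matrix.of_apply, MBf]
  by_cases h1 : p1 = q1
  · simp [h1, Dm]
  · rw [if_neg h1, if_neg h1]
    by_cases h2 : (q1 : ℕ) = (p1 : ℕ) + 1
    · have hlt : (p1 : ℕ) < n := by have := q1.isLt; omega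
      rw [dif_pos h2, if_pos h2]
      show _ = (Pm d t hh p1) p2 q2
      unfold Pm
      rw [dif_pos hlt]
      rfl
    · rw [dif_neg h2, if_neg h2]
      by_cases h3 : p1 = Fin.last n ∧ q1 = 0
      · rw [if_pos h3, if_pos h3]
        rw [Matrix.smul_apply, smul_eq_mul]
        congr 1
        unfold Pm
        rw [Fin.val_last, dif_neg (lt_irrefl n)]
        rfl
      · rw [if_neg h3, if_neg h3]
        simp

lemma det_blk_Vf : (blk (Vf a b c d t hh)).det = 1 := by
  have h : ∀ i j : Fin (n+1), i < j → Vf a b c d t hh i j = 0 := by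
    intro i j hij
    unfold Vf
    rw [if_neg, if_neg (ne_of_lt hij)]
    intro h
    subst h
    exact absurd hij (Fin.not_lt_zero i)
  rw [det_blk_lower _ h]
  apply Finset.prod_eq_one
  intro i _
  by_cases h0 : i = 0
  · subst h0
    unfold Vf
    rw [if_pos rfl]
    show (Cc a b c d t hh ((0 : Fin (n+1)) : ℕ)).det = 1
    norm_num [Cc]
  · unfold Vf
    rw [if_neg h0, if_pos rfl, Matrix.det_one]

lemma det_blk_Ff (ht : t ≠ 0) :
    (blk (Ff a b c d t hh z)).det
      = t * (z • (1 : Matrix (Fin 2) (Fin 2) K) - Cc a b c d t hh (n+1)).det := by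
  have h : ∀ i j : Fin (n+1), i < j → Ff a b c d t hh z i j = 0 := by
    intro i j hij
    have hv : (i : ℕ) < (j : ℕ) := hij
    unfold Ff
    rw [if_neg (ne_of_lt hij), if_neg (by omega)]
  rw [det_blk_lower _ h, Fin.prod_univ_castSucc]
  have hone : ∀ i : Fin n,
      (Ff a b c d t hh z (Fin.castSucc i) (Fin.castSucc i)).det = 1 := by
    intro i
    have hlt : ((Fin.castSucc i : Fin (n+1)) : ℕ) < n := by
      simp [Fin.coe_castSucc]
    unfold Ff
    rw [if_pos rfl, if_pos hlt, det_Pm, if_pos hlt]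
  rw [Finset.prod_congr rfl (fun i _ => hone i), Finset.prod_const_one, one_mul]
  unfold Ff
  rw [if_pos rfl, if_neg (by simp [Fin.val_last]), Matrix.det_mul, det_Pm,
    if_neg (by simp [Fin.val_last])]

lemma det_blk_Sf : (blk (Sf (n := n) (K := K))).det = 1 := by
  set e : Equiv.Perm (Fin (n+1) × Fin 2) :=
    Equiv.prodCongrLeft (fun _ : Fin 2 => Equiv.addRight (1 : Fin (n+1))) with he
  have hS : blk (Sf (n := n) (K := K)) = e.permMatrix K := by
    ext ⟨p1, p2⟩ ⟨q1, q2⟩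
    show (if q1 = p1 + 1 then (1 : Matrix (Fin 2) (Fin 2) K) else 0) p2 q2 = _
    rw [show (e.permMatrix K) (p1, p2) (q1, q2)
        = (1 : Matrix (Fin (n+1) × Fin 2) (Fin (n+1) × Fin 2) K) (e (p1, p2)) (q1, q2)
      from by
        unfold Equiv.Perm.permMatrix
        rw [PEquiv.toMatrix_toPEquiv_apply, Pi.single_apply, Matrix.one_apply]
        exact if_congr eq_comm rfl rfl]
    have he2 : e (p1, p2) = (p1 + 1, p2) := rfl
    rw [he2, Matrix.one_apply]
    by_cases h : q1 = p1 + 1 <;> by_cases h2 : p2 = q2 <;>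
      simp [h, h2, Matrix.one_apply, Prod.ext_iff, eq_comm]
  rw [hS, Matrix.det_permutation]
  have hsign : Equiv.Perm.sign e = 1 := by
    rw [he, Equiv.Perm.sign_prodCongrLeft, Fin.prod_univ_two, Int.units_mul_self]
  rw [hsign]
  simp

end Main

end Stmt19Aux

/-- `det M(z) = t · det (z·I - A(0))`. -/
theorem stmt19 (n : ℕ) (hn : 1 ≤ n) (K : Type*) [Field K]
    (a b c : Fin (n+1) → K) (d : Fin n → K) (t hh : K)
    (ha : a 0 ≠ 0) (ht : t ≠ 0) :
    ∀ z : K, (Mblock n a b c d t hh z).det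
      = t * (z • (1 : Matrix (Fin 2) (Fin 2) K) - Amat n a b c d t hh 0).det := by
  intro z
  open Stmt19Aux in
  rw [Mblock_eq_blk a b c d t hh z]
  have hkey : blk (MBf a b c d t hh z) * blk (Vf a b c d t hh)
      = blk (Ff a b c d t hh z) * blk (Sf (n := n) (K := K)) := by
    have hfun : (fun i j => ∑ k, MBf a b c d t hh z i k * Vf a b c d t hh k j)
        = (fun i j => ∑ k, Ff a b c d t hh z i k * Sf k j) := by
      funext i j
      rw [Stmt19Aux.sumL a b c d t hh z hn ht i j, Stmt19Aux.sumR a b c d t hh z hn i j]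
    rw [Stmt19Aux.blk_mul, Stmt19Aux.blk_mul, hfun]
  have h1 : (blk (MBf a b c d t hh z)).det
      = (blk (MBf a b c d t hh z) * blk (Vf a b c d t hh)).det := by
    rw [Matrix.det_mul, Stmt19Aux.det_blk_Vf, mul_one]
  rw [h1, hkey, Matrix.det_mul, Stmt19Aux.det_blk_Sf, mul_one,
    Stmt19Aux.det_blk_Ff a b c d t hh z ht,
    Stmt19Aux.Cc_eq_Amat b c d t hh a ha ht]
end
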